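/- arXiv:2106.08208 — 8 statements merged into one kernel-verified Lean document; each statement's English description precedes it below -/
import Mathlib

section
/- Let X ⊆ ℝ^d be a closed convex set, let w : ℝ^d → ℝ be a differentiable ρ-strongly convex function (ρ > 0) with associated Bregman distance V(y,x) = w(y) − w(x) − ⟨∇w(x), y − x⟩, and let h : ℝ^d → ℝ be a convex function. Fix x ∈ X, g ∈ ℝ^d and γ > 0, let x* be the minimizer over y ∈ X of ⟨g, y⟩ + (1/γ) V(y,x) + h(y), and set G = (x − x*)/γ. Then ⟨g, G⟩ ≥ ρ‖G‖² + (1/γ)(h(x*) − h(x)). -/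
open scoped RealInnerProductSpace

set_option maxHeartbeats 1600000 in
/-- Lemma 1 of Ghadimi–Lan–Zhang, as used in SUPER-ADAM:
for a closed convex `X ⊆ ℝ^d`, a differentiable `ρ`-strongly convex `w` with Bregman
distance `V`, a convex `h`, a point `x ∈ X`, a vector `g` and `γ > 0`, if `x*` minimizes
`⟨g, y⟩ + (1/γ) V(y, x) + h(y)` over `y ∈ X` and `G = (x − x*)/γ`, then
`⟨g, G⟩ ≥ ρ‖G‖² + (1/γ)(h(x*) − h(x))`. -/
theorem statement0 {d : ℕ} (X : Set (EuclideanSpace ℝ (Fin d)))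
    (hXne : X.Nonempty) (hXclosed : IsClosed X) (hXconvex : Convex ℝ X)
    (w : EuclideanSpace ℝ (Fin d) → ℝ)
    (gw : EuclideanSpace ℝ (Fin d) → EuclideanSpace ℝ (Fin d))
    (ρ : ℝ) (hρ : 0 < ρ)
    (hw : ∀ x, HasGradientAt w (gw x) x)
    (hstrong : ∀ x y : EuclideanSpace ℝ (Fin d),
      w x + ⟪gw x, y - x⟫ + ρ / 2 * ‖y - x‖ ^ 2 ≤ w y)
    (h : EuclideanSpace ℝ (Fin d) → ℝ) (hconv : ConvexOn ℝ Set.univ h)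
    (V : EuclideanSpace ℝ (Fin d) → EuclideanSpace ℝ (Fin d) → ℝ)
    (hV : ∀ y x, V y x = w y - (w x + ⟪gw x, y - x⟫))
    (x : EuclideanSpace ℝ (Fin d)) (hx : x ∈ X)
    (g : EuclideanSpace ℝ (Fin d)) (γ : ℝ) (hγ : 0 < γ)
    (xstar : EuclideanSpace ℝ (Fin d)) (hxstarX : xstar ∈ X)
    (hmin : ∀ y ∈ X,
      ⟪g, xstar⟫ + (1 / γ) * V xstar x + h xstar ≤ ⟪g, y⟫ + (1 / γ) * V y x + h y)
    (G : EuclideanSpace ℝ (Fin d)) (hG : G = (1 / γ) • (x - xstar)) :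
    ρ * ‖G‖ ^ 2 + (1 / γ) * (h xstar - h x) ≤ ⟪g, G⟫ := by
  subst hG
  have hng : 0 < 1/γ := by positivity
  have key : ∀ t ∈ Set.Ioo (0:ℝ) 1,
      1/γ * (ρ * (1 - t/2) * ‖x - xstar‖^2) + (h xstar - h x) ≤ ⟪g, x - xstar⟫ := by
    intro t ht
    obtain ⟨ht0, ht1⟩ := ht
    set y := xstar + t • (x - xstar) with hy
    have hcomb : (1 - t) • xstar + t • x = y := by rw [hy]; module
    have hyX : y ∈ X := by
      have := hXconvex hxstarX hx (by linarith : (0:ℝ) ≤ 1 - t) ht0.le (by ring)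
      rwa [hcomb] at this
    have hyx : y - x = (1 - t) • (xstar - x) := by rw [hy]; module
    have hxy : x - y = (1 - t) • (x - xstar) := by rw [hy]; module
    have hxsy : xstar - y = (-t) • (x - xstar) := by rw [hy]; module
    set a := ⟪gw x, x - xstar⟫ with ha
    set b := ⟪gw y, x - xstar⟫ with hb
    set A := ⟪g, x - xstar⟫ with hA
    set n := ‖x - xstar‖^2 with hn
    have hgy : ⟪g, y⟫ = ⟪g, xstar⟫ + t * A := by
      rw [hy, inner_add_right, real_inner_smul_right]
    have hnn : (0:ℝ) ≤ n := by rw [hn]; positivity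
    have hnorm1 : ‖y - x‖^2 = (1-t)^2 * n := by
      rw [hyx, norm_smul, Real.norm_eq_abs, mul_pow, sq_abs, norm_sub_rev, hn]
    have hnorm2 : ‖x - y‖^2 = (1-t)^2 * n := by
      rw [hxy, norm_smul, Real.norm_eq_abs, mul_pow, sq_abs, hn]
    have hnorm3 : ‖xstar - y‖^2 = t^2 * n := by
      rw [hxsy, norm_smul, Real.norm_eq_abs, mul_pow, sq_abs, neg_sq, hn]
    have hinner1 : ⟪gw x, y - x⟫ = -((1-t) * a) := by
      rw [hyx, real_inner_smul_right, ha, ← neg_sub x xstar, inner_neg_right]; ring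
    have hinner2 : ⟪gw y, x - y⟫ = (1-t) * b := by
      rw [hxy, real_inner_smul_right]
    have hinner3 : ⟪gw y, xstar - y⟫ = -(t * b) := by
      rw [hxsy, real_inner_smul_right]; ring
    have hinner4 : ⟪gw x, xstar - x⟫ = -a := by
      rw [ha, ← neg_sub x xstar, inner_neg_right]
    have S2 := hstrong x y
    rw [hinner1, hnorm1] at S2
    have S3 := hstrong y x
    rw [hinner2, hnorm2] at S3
    have S1 := hstrong y xstar
    rw [hinner3, hnorm3] at S1
    have hs : (0:ℝ) < 1 - t := by linarith
    have hmono : ρ * (1 - t) * n ≤ a - b := by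
      have hpre : (1 - t) * (ρ * (1 - t) * n) ≤ (1 - t) * (a - b) := by nlinarith [S2, S3]
      exact le_of_mul_le_mul_left hpre hs
    have hh : h y ≤ (1 - t) * h xstar + t * h x := by
      have := hconv.2 (Set.mem_univ xstar) (Set.mem_univ x)
        (by linarith : (0:ℝ) ≤ 1 - t) ht0.le (by ring)
      rwa [hcomb] at this
    have hM := hmin y hyX
    rw [hgy, hV xstar x, hV y x, hinner1, hinner4] at hM
    clear_value y a b A n
    clear hmin hstrong hV hw hconv hgy hinner1 hinner2 hinner3 hinner4 hnorm1 hnorm2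
      hnorm3 hcomb hyx hxy hxsy S2 S3
    have h2 : (1/γ) * (w y + -(t * b) + ρ / 2 * (t^2 * n)) ≤ (1/γ) * w xstar :=
      mul_le_mul_of_nonneg_left S1 hng.le
    have hcomb2 : (1/γ) * (t * (a - b) + ρ * t^2/2 * n) + t * (h xstar - h x) ≤ t * A := by
      linarith [hM, hh, h2]
    have h3 : (1/γ) * (t * (ρ * (1-t) * n)) ≤ (1/γ) * (t * (a - b)) :=
      mul_le_mul_of_nonneg_left (mul_le_mul_of_nonneg_left hmono ht0.le) hng.le
    have hfin : t * (1/γ * (ρ * (1 - t/2) * n) + (h xstar - h x)) ≤ t * A := by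
      linarith [hcomb2, h3]
    exact le_of_mul_le_mul_left hfin ht0
  have cont : Continuous
      (fun t : ℝ => 1/γ * (ρ * (1 - t/2) * ‖x - xstar‖^2) + (h xstar - h x)) := by
    fun_prop
  haveI : (nhdsWithin (0:ℝ) (Set.Ioo 0 1)).NeBot := by
    rw [nhdsWithin_Ioo_eq_nhdsGT one_pos]; infer_instance
  have lim0 := le_of_tendsto (((cont.tendsto 0)).mono_left
      (nhdsWithin_le_nhds (s := Set.Ioo (0:ℝ) 1)))
    (Filter.eventually_iff_exists_mem.2 ⟨Set.Ioo 0 1, self_mem_nhdsWithin,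
      fun t ht => key t ht⟩)
  beta_reduce at lim0
  have lim : 1/γ * (ρ * ‖x - xstar‖^2) + (h xstar - h x) ≤ ⟪g, x - xstar⟫ := by
    linarith [lim0]
  have hnormG : ‖(1/γ) • (x - xstar)‖^2 = 1/γ * (1/γ * ‖x - xstar‖^2) := by
    rw [norm_smul, Real.norm_eq_abs, abs_of_pos hng]; ring
  have hinnerG : ⟪g, (1/γ) • (x - xstar)⟫ = (1/γ) * ⟪g, x - xstar⟫ :=
    real_inner_smul_right _ _ _
  rw [hnormG, hinnerG]
  have hm := mul_le_mul_of_nonneg_left lim hng.le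
  linarith [hm]
end

section
/- Let X ⊆ ℝ^d be a closed convex set, let w : ℝ^d → ℝ be a differentiable ρ-strongly convex function (ρ > 0) with Bregman distance V(y,x) = w(y) − w(x) − ⟨∇w(x), y − x⟩, and let h : ℝ^d → ℝ be convex. Fix x ∈ X and γ > 0. For i = 1, 2, let x_i* be the minimizer over y ∈ X of ⟨g_i, y⟩ + (1/γ) V(y,x) + h(y), and set G_i = (x − x_i*)/γ. Then ‖G_1 − G_2‖ ≤ (1/ρ)‖g_1 − g_2‖. -/
open scoped RealInnerProductSpace


private lemma qgrowth {E : Type*} [NormedAddCommGroup E] [InnerProductSpace ℝ E]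
    (X : Set E) (hXconvex : Convex ℝ X) (F : E → ℝ) (μ : ℝ)
    (hcomb : ∀ a ∈ X, ∀ b ∈ X, ∀ t : ℝ, 0 ≤ t → t ≤ 1 →
      F ((1 - t) • a + t • b) ≤ (1 - t) * F a + t * F b - μ / 2 * (t * (1 - t)) * ‖b - a‖ ^ 2)
    (xs : E) (hxs : xs ∈ X) (hmin : ∀ y ∈ X, F xs ≤ F y) :
    ∀ y ∈ X, F xs + μ / 2 * ‖y - xs‖ ^ 2 ≤ F y := by
  intro y hy
  have key : ∀ t ∈ Set.Ioo (0 : ℝ) 1,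
      F xs ≤ F y - μ / 2 * (1 - t) * ‖y - xs‖ ^ 2 := by
    intro t ht
    have hz : (1 - t) • xs + t • y ∈ X :=
      hXconvex hxs hy (by linarith [ht.2]) (le_of_lt ht.1) (by ring)
    have h1 := hcomb xs hxs y hy t (le_of_lt ht.1) (le_of_lt ht.2)
    have h2 := hmin _ hz
    have h3 : t * F xs ≤ t * (F y - μ / 2 * (1 - t) * ‖y - xs‖ ^ 2) := by
      have h4 := h2.trans h1
      nlinarith [h4]
    have ht0 : 0 < t := ht.1
    exact le_of_mul_le_mul_left h3 ht0
  have hlim : Filter.Tendsto (fun t : ℝ => F y - μ / 2 * (1 - t) * ‖y - xs‖ ^ 2)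
      (nhdsWithin 0 (Set.Ioi 0)) (nhds (F y - μ / 2 * (1 - 0) * ‖y - xs‖ ^ 2)) :=
    Filter.Tendsto.mono_left (Continuous.tendsto (by continuity) 0) nhdsWithin_le_nhds
  have hev : ∀ᶠ t in nhdsWithin (0:ℝ) (Set.Ioi 0),
      F xs ≤ F y - μ / 2 * (1 - t) * ‖y - xs‖ ^ 2 := by
    filter_upwards [Ioo_mem_nhdsGT_of_mem (Set.left_mem_Ico.2 one_pos)] with t ht
    exact key t ht
  have := ge_of_tendsto hlim hev
  linarith [this]


private lemma wcomb {E : Type*} [NormedAddCommGroup E] [InnerProductSpace ℝ E]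
    (w : E → ℝ) (gw : E → E) (ρ : ℝ)
    (hstrong : ∀ x y : E, w x + ⟪gw x, y - x⟫ + ρ / 2 * ‖y - x‖ ^ 2 ≤ w y)
    (a b : E) (t : ℝ) (ht0 : 0 ≤ t) (ht1 : t ≤ 1) :
    w ((1 - t) • a + t • b) ≤ (1 - t) * w a + t * w b - ρ / 2 * (t * (1 - t)) * ‖b - a‖ ^ 2 := by
  set z := (1 - t) • a + t • b with hz
  have ha := hstrong z a
  have hb := hstrong z b
  have haz : a - z = t • (a - b) := by
    rw [hz]; module
  have hbz : b - z = (1 - t) • (b - a) := by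
    rw [hz]; module
  have hna : ‖a - z‖ ^ 2 = t ^ 2 * ‖b - a‖ ^ 2 := by
    rw [haz, norm_smul]
    have : ‖a - b‖ = ‖b - a‖ := norm_sub_rev a b
    rw [this]
    simp [abs_of_nonneg ht0]
    ring
  have hnb : ‖b - z‖ ^ 2 = (1 - t) ^ 2 * ‖b - a‖ ^ 2 := by
    rw [hbz, norm_smul]
    simp [abs_of_nonneg (by linarith : (0:ℝ) ≤ 1 - t)]
    ring
  have hinner : (1 - t) * ⟪gw z, a - z⟫ + t * ⟪gw z, b - z⟫ = 0 := by
    have : (1 - t) • (a - z) + t • (b - z) = 0 := by rw [hz]; module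
    have h0 : ⟪gw z, (1 - t) • (a - z) + t • (b - z)⟫ = (0:ℝ) := by
      rw [this, inner_zero_right]
    rw [inner_add_right, real_inner_smul_right, real_inner_smul_right] at h0
    linarith
  rw [hna] at ha
  rw [hnb] at hb
  nlinarith [mul_le_mul_of_nonneg_left ha (by linarith : (0:ℝ) ≤ 1 - t),
    mul_le_mul_of_nonneg_left hb ht0]


/-- Proposition 1 of Ghadimi–Lan–Zhang, as used in SUPER-ADAM:
with `X`, `w`, `V`, `h`, `x ∈ X`, `γ > 0` as before, if for `i = 1, 2` the point `xᵢ*`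
minimizes `⟨gᵢ, y⟩ + (1/γ) V(y, x) + h(y)` over `y ∈ X` and `Gᵢ = (x − xᵢ*)/γ`, then
`‖G₁ − G₂‖ ≤ (1/ρ)‖g₁ − g₂‖`. -/
theorem statement1 {d : ℕ} (X : Set (EuclideanSpace ℝ (Fin d)))
    (hXne : X.Nonempty) (hXclosed : IsClosed X) (hXconvex : Convex ℝ X)
    (w : EuclideanSpace ℝ (Fin d) → ℝ)
    (gw : EuclideanSpace ℝ (Fin d) → EuclideanSpace ℝ (Fin d))
    (ρ : ℝ) (hρ : 0 < ρ)
    (hw : ∀ x, HasGradientAt w (gw x) x)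
    (hstrong : ∀ x y : EuclideanSpace ℝ (Fin d),
      w x + ⟪gw x, y - x⟫ + ρ / 2 * ‖y - x‖ ^ 2 ≤ w y)
    (h : EuclideanSpace ℝ (Fin d) → ℝ) (hconv : ConvexOn ℝ Set.univ h)
    (V : EuclideanSpace ℝ (Fin d) → EuclideanSpace ℝ (Fin d) → ℝ)
    (hV : ∀ y x, V y x = w y - (w x + ⟪gw x, y - x⟫))
    (x : EuclideanSpace ℝ (Fin d)) (hx : x ∈ X)
    (g₁ g₂ : EuclideanSpace ℝ (Fin d)) (γ : ℝ) (hγ : 0 < γ)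
    (xstar₁ xstar₂ : EuclideanSpace ℝ (Fin d))
    (hxstar₁X : xstar₁ ∈ X) (hxstar₂X : xstar₂ ∈ X)
    (hmin₁ : ∀ y ∈ X,
      ⟪g₁, xstar₁⟫ + (1 / γ) * V xstar₁ x + h xstar₁ ≤ ⟪g₁, y⟫ + (1 / γ) * V y x + h y)
    (hmin₂ : ∀ y ∈ X,
      ⟪g₂, xstar₂⟫ + (1 / γ) * V xstar₂ x + h xstar₂ ≤ ⟪g₂, y⟫ + (1 / γ) * V y x + h y)
    (G₁ G₂ : EuclideanSpace ℝ (Fin d))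
    (hG₁ : G₁ = (1 / γ) • (x - xstar₁)) (hG₂ : G₂ = (1 / γ) • (x - xstar₂)) :
    ‖G₁ - G₂‖ ≤ (1 / ρ) * ‖g₁ - g₂‖ := by
  set μ : ℝ := ρ / γ with hμ
  have hμpos : 0 < μ := div_pos hρ hγ
  -- combination convexity of the objectives
  have hcomb : ∀ g : EuclideanSpace ℝ (Fin d),
      ∀ a ∈ X, ∀ b ∈ X, ∀ t : ℝ, 0 ≤ t → t ≤ 1 →
      (fun y => ⟪g, y⟫ + (1 / γ) * V y x + h y) ((1 - t) • a + t • b) ≤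
        (1 - t) * (fun y => ⟪g, y⟫ + (1 / γ) * V y x + h y) a +
        t * (fun y => ⟪g, y⟫ + (1 / γ) * V y x + h y) b -
        μ / 2 * (t * (1 - t)) * ‖b - a‖ ^ 2 := by
    intro g a _ b _ t ht0 ht1
    simp only
    set z := (1 - t) • a + t • b with hz
    have hlin1 : ⟪g, z⟫ = (1 - t) * ⟪g, a⟫ + t * ⟪g, b⟫ := by
      rw [hz, inner_add_right, real_inner_smul_right, real_inner_smul_right]
    have hlin2 : ⟪gw x, z - x⟫ = (1 - t) * ⟪gw x, a - x⟫ + t * ⟪gw x, b - x⟫ := by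
      have : z - x = (1 - t) • (a - x) + t • (b - x) := by rw [hz]; module
      rw [this, inner_add_right, real_inner_smul_right, real_inner_smul_right]
    have hwz := wcomb w gw ρ hstrong a b t ht0 ht1
    have hhz : h z ≤ (1 - t) * h a + t * h b :=
      hconv.2 (Set.mem_univ a) (Set.mem_univ b) (by linarith) ht0 (by ring)
    rw [hV, hV, hV, hlin1, hlin2]
    have hγ' : 0 < 1 / γ := by positivity
    have : (1 / γ) * w z ≤ (1 / γ) * ((1 - t) * w a + t * w b
        - ρ / 2 * (t * (1 - t)) * ‖b - a‖ ^ 2) :=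
      mul_le_mul_of_nonneg_left hwz hγ'.le
    have hμγ : μ / 2 * (t * (1 - t)) * ‖b - a‖ ^ 2
        = (1 / γ) * (ρ / 2 * (t * (1 - t)) * ‖b - a‖ ^ 2) := by
      rw [hμ]; field_simp
    nlinarith [this]
  -- quadratic growth at each minimizer
  have hq₁ := qgrowth X hXconvex (fun y => ⟪g₁, y⟫ + (1 / γ) * V y x + h y) μ
    (hcomb g₁) xstar₁ hxstar₁X hmin₁ xstar₂ hxstar₂X
  have hq₂ := qgrowth X hXconvex (fun y => ⟪g₂, y⟫ + (1 / γ) * V y x + h y) μ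
    (hcomb g₂) xstar₂ hxstar₂X hmin₂ xstar₁ hxstar₁X
  have hnormsym : ‖xstar₁ - xstar₂‖ = ‖xstar₂ - xstar₁‖ := norm_sub_rev _ _
  have hsum : μ * ‖xstar₂ - xstar₁‖ ^ 2 ≤ ⟪g₁ - g₂, xstar₂ - xstar₁⟫ := by
    have e1 : ⟪g₁ - g₂, xstar₂ - xstar₁⟫
        = ⟪g₁, xstar₂⟫ - ⟪g₁, xstar₁⟫ - ⟪g₂, xstar₂⟫ + ⟪g₂, xstar₁⟫ := by
      rw [inner_sub_left, inner_sub_right, inner_sub_right]; ring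
    rw [e1]
    rw [hnormsym] at hq₂
    linarith
  have hCS : ⟪g₁ - g₂, xstar₂ - xstar₁⟫ ≤ ‖g₁ - g₂‖ * ‖xstar₂ - xstar₁‖ :=
    real_inner_le_norm _ _
  have hΔ : ‖xstar₂ - xstar₁‖ ≤ (γ / ρ) * ‖g₁ - g₂‖ := by
    rcases eq_or_lt_of_le (norm_nonneg (xstar₂ - xstar₁)) with h0 | h0
    · rw [← h0]; positivity
    · have : μ * ‖xstar₂ - xstar₁‖ ≤ ‖g₁ - g₂‖ := by
        rw [← mul_le_mul_iff_of_pos_right h0]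
        calc μ * ‖xstar₂ - xstar₁‖ * ‖xstar₂ - xstar₁‖
            = μ * ‖xstar₂ - xstar₁‖ ^ 2 := by ring
          _ ≤ ⟪g₁ - g₂, xstar₂ - xstar₁⟫ := hsum
          _ ≤ ‖g₁ - g₂‖ * ‖xstar₂ - xstar₁‖ := hCS
      rw [hμ] at this
      have hγρ : (0:ℝ) < γ / ρ := by positivity
      calc ‖xstar₂ - xstar₁‖ = (γ / ρ) * (ρ / γ * ‖xstar₂ - xstar₁‖) := by
            field_simp
        _ ≤ (γ / ρ) * ‖g₁ - g₂‖ := mul_le_mul_of_nonneg_left this hγρ.le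
  have hGdiff : G₁ - G₂ = (1 / γ) • (xstar₂ - xstar₁) := by
    rw [hG₁, hG₂]; module
  rw [hGdiff, norm_smul]
  simp only [Real.norm_eq_abs, abs_of_pos (by positivity : (0:ℝ) < 1 / γ)]
  calc (1 / γ) * ‖xstar₂ - xstar₁‖ ≤ (1 / γ) * ((γ / ρ) * ‖g₁ - g₂‖) :=
        mul_le_mul_of_nonneg_left hΔ (by positivity)
    _ = (1 / ρ) * ‖g₁ - g₂‖ := by field_simp
end

section
/- Let X ⊆ ℝ^d be a closed convex set, let f : ℝ^d → ℝ be differentiable and L-smooth (L > 0), let H ∈ ℝ^{d×d} be a symmetric matrix with H ⪰ ρ I_d for some ρ > 0, let x_t ∈ X, g_t ∈ ℝ^d, let 0 < μ_t ≤ 1 and 0 < γ ≤ ρ/(2 L μ_t). Define x̃_{t+1} as the minimizer over x ∈ X of ⟨g_t, x⟩ + (1/(2γ)) (x − x_t)ᵀ H (x − x_t), and x_{t+1} = (1 − μ_t) x_t + μ_t x̃_{t+1}. Then f(x_{t+1}) ≤ f(x_t) + (μ_t γ / ρ) ‖∇f(x_t) − g_t‖² − (ρ μ_t / (2γ)) ‖x̃_{t+1}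 − x_t‖². -/
open scoped RealInnerProductSpace


/-- Descent lemma for L-smooth functions. -/
lemma descent_lemma {d : ℕ} (f : EuclideanSpace ℝ (Fin d) → ℝ)
    (gf : EuclideanSpace ℝ (Fin d) → EuclideanSpace ℝ (Fin d))
    (hf : ∀ x, HasGradientAt f (gf x) x)
    (L : ℝ) (hL : 0 ≤ L)
    (hsmooth : ∀ x y : EuclideanSpace ℝ (Fin d), ‖gf x - gf y‖ ≤ L * ‖x - y‖)
    (x y : EuclideanSpace ℝ (Fin d)) :
    f y ≤ f x + ⟪gf x, y - x⟫ + L / 2 * ‖y - x‖ ^ 2 := by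
  set v := y - x with hv
  have hline : ∀ t : ℝ, HasDerivAt (fun t : ℝ => f (x + t • v)) ⟪gf (x + t • v), v⟫ t := by
    intro t
    have h1 : HasDerivAt (fun t : ℝ => x + t • v) v t := by
      simpa using (HasDerivAt.const_add x ((hasDerivAt_id t).smul_const v))
    have h2 := (hf (x + t • v)).hasFDerivAt.comp_hasDerivAt t h1
    simpa [InnerProductSpace.toDual_apply_apply, Function.comp_def] using h2
  set h : ℝ → ℝ := fun t => L * t ^ 2 * ‖v‖ ^ 2 / 2 + t * ⟪gf x, v⟫ + f x - f (x + t • v)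
    with hh
  have hderiv : ∀ t : ℝ, HasDerivAt h (L * t * ‖v‖ ^ 2 + ⟪gf x, v⟫ - ⟪gf (x + t • v), v⟫) t := by
    intro t
    have h1 : HasDerivAt (fun t : ℝ => L * t ^ 2 * ‖v‖ ^ 2 / 2 + t * ⟪gf x, v⟫ + f x)
        (L * t * ‖v‖ ^ 2 + ⟪gf x, v⟫) t := by
      have ha := (((hasDerivAt_pow 2 t).const_mul L).mul_const (‖v‖ ^ 2)).div_const 2
      have hb := ((hasDerivAt_id t).mul_const (⟪gf x, v⟫ : ℝ))
      refine ((ha.add hb).add_const (f x)).congr_deriv ?_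
      push_cast
      ring
    exact h1.sub (hline t)
  have hmono : MonotoneOn h (Set.Icc 0 1) := by
    apply monotoneOn_of_deriv_nonneg (convex_Icc 0 1)
    · exact fun t _ => ((hderiv t).continuousAt).continuousWithinAt
    · exact fun t _ => ((hderiv t).differentiableAt).differentiableWithinAt
    · intro t ht
      rw [interior_Icc] at ht
      rw [(hderiv t).deriv]
      have hb : ⟪gf x - gf (x + t • v), v⟫ ≥ -(L * t * ‖v‖ ^ 2) := by
        have h1 : ⟪gf x - gf (x + t • v), v⟫ ≥ -(‖gf x - gf (x + t • v)‖ * ‖v‖) := by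
          have := abs_real_inner_le_norm (gf x - gf (x + t • v)) v
          have := neg_abs_le (⟪gf x - gf (x + t • v), v⟫ : ℝ)
          linarith [abs_real_inner_le_norm (gf x - gf (x + t • v)) v,
            neg_abs_le (⟪gf x - gf (x + t • v), v⟫ : ℝ)]
        have h2 : ‖gf x - gf (x + t • v)‖ ≤ L * (t * ‖v‖) := by
          have := hsmooth x (x + t • v)
          have hxy : x - (x + t • v) = -(t • v) := by abel
          rw [hxy, norm_neg, norm_smul] at this
          simpa [abs_of_pos ht.1, mul_assoc] using this
        nlinarith [norm_nonneg v, norm_nonneg (gf x - gf (x + t • v)), ht.1.le]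
      have := inner_sub_left (𝕜 := ℝ) (gf x) (gf (x + t • v)) v
      linarith [hb, this]
  have h01 : h 0 ≤ h 1 := hmono (Set.mem_Icc.2 ⟨le_refl 0, zero_le_one⟩)
    (Set.mem_Icc.2 ⟨zero_le_one, le_refl 1⟩) zero_le_one
  have h0 : h 0 = 0 := by simp [hh]
  have hx1 : x + (1 : ℝ) • v = y := by rw [one_smul, hv]; abel
  have h1e : h 1 = L * ‖v‖ ^ 2 / 2 + ⟪gf x, v⟫ + f x - f y := by
    rw [hh]
    simp only [hx1, one_pow, mul_one, one_mul]
  rw [h0, h1e] at h01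
  linarith

set_option maxHeartbeats 1000000 in
/-- descent lemma, Lemma 3 in SUPER-ADAM: for `X ⊆ ℝ^d` closed convex,
`f` differentiable and `L`-smooth, a symmetric matrix `H ⪰ ρ I_d` with `ρ > 0`,
`x_t ∈ X`, `g_t ∈ ℝ^d`, `0 < μ_t ≤ 1` and `0 < γ ≤ ρ/(2 L μ_t)`, if `x̃_{t+1}` minimizes
`⟨g_t, x⟩ + (1/(2γ)) (x − x_t)ᵀ H (x − x_t)` over `X` and
`x_{t+1} = (1 − μ_t) x_t + μ_t x̃_{t+1}`, then
`f(x_{t+1}) ≤ f(x_t) + (μ_t γ/ρ)‖∇f(x_t) − g_t‖² − (ρ μ_t/(2γ))‖x̃_{t+1} − x_t‖²`. -/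
theorem statement2 {d : ℕ} (X : Set (EuclideanSpace ℝ (Fin d)))
    (hXne : X.Nonempty) (hXclosed : IsClosed X) (hXconvex : Convex ℝ X)
    (f : EuclideanSpace ℝ (Fin d) → ℝ)
    (gf : EuclideanSpace ℝ (Fin d) → EuclideanSpace ℝ (Fin d))
    (hf : ∀ x, HasGradientAt f (gf x) x)
    (L : ℝ) (hL : 0 < L)
    (hsmooth : ∀ x y : EuclideanSpace ℝ (Fin d), ‖gf x - gf y‖ ≤ L * ‖x - y‖)
    (H : Matrix (Fin d) (Fin d) ℝ) (hHsymm : H.IsSymm)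
    (ρ : ℝ) (hρ : 0 < ρ)
    (hHpd : ∀ v : EuclideanSpace ℝ (Fin d),
      ρ * ‖v‖ ^ 2 ≤ ⟪(Matrix.toEuclideanCLM (𝕜 := ℝ) H) v, v⟫)
    (xt : EuclideanSpace ℝ (Fin d)) (hxt : xt ∈ X)
    (gt : EuclideanSpace ℝ (Fin d))
    (μ γ : ℝ) (hμ0 : 0 < μ) (hμ1 : μ ≤ 1) (hγ0 : 0 < γ) (hγ : γ ≤ ρ / (2 * L * μ))
    (xtil : EuclideanSpace ℝ (Fin d)) (hxtilX : xtil ∈ X)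
    (hxtilmin : ∀ y ∈ X,
      ⟪gt, xtil⟫ + (1 / (2 * γ)) * ⟪(Matrix.toEuclideanCLM (𝕜 := ℝ) H) (xtil - xt), xtil - xt⟫
        ≤ ⟪gt, y⟫ + (1 / (2 * γ)) * ⟪(Matrix.toEuclideanCLM (𝕜 := ℝ) H) (y - xt), y - xt⟫)
    (xt1 : EuclideanSpace ℝ (Fin d)) (hxt1 : xt1 = (1 - μ) • xt + μ • xtil) :
    f xt1 ≤ f xt + μ * γ / ρ * ‖gf xt - gt‖ ^ 2 - ρ * μ / (2 * γ) * ‖xtil - xt‖ ^ 2 := by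
  set T := Matrix.toEuclideanCLM (𝕜 := ℝ) H with hT
  set δ := xtil - xt with hδ
  set Q : ℝ := ⟪T δ, δ⟫ with hQ
  have hQρ : ρ * ‖δ‖ ^ 2 ≤ Q := hHpd δ
  have hQ0 : 0 ≤ Q := le_trans (by positivity) hQρ
  -- Step: variational inequality for each s ∈ (0, 1]
  have step : ∀ s : ℝ, 0 < s → s ≤ 1 → ⟪gt, δ⟫ ≤ -((2 - s) / (2 * γ)) * Q := by
    intro s hs0 hs1
    set ys := (1 - s) • xtil + s • xt with hys
    have hysX : ys ∈ X := hXconvex hxtilX hxt (by linarith) hs0.le (by ring)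
    have hysδ : ys - xt = (1 - s) • δ := by rw [hys, hδ]; module
    have hmin := hxtilmin ys hysX
    rw [hysδ] at hmin
    have hTs : (⟪T ((1 - s) • δ), (1 - s) • δ⟫ : ℝ) = (1 - s) ^ 2 * Q := by
      rw [map_smul, real_inner_smul_left, real_inner_smul_right, hQ]; ring
    have hgys : (⟪gt, ys⟫ : ℝ) = (1 - s) * ⟪gt, xtil⟫ + s * ⟪gt, xt⟫ := by
      rw [hys, inner_add_right, real_inner_smul_right, real_inner_smul_right]
    rw [hTs, hgys] at hmin
    have hsub : (⟪gt, δ⟫ : ℝ) = ⟪gt, xtil⟫ - ⟪gt, xt⟫ := by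
      rw [hδ, inner_sub_right]
    have hmul : s * ⟪gt, δ⟫ ≤ s * (-((2 - s) / (2 * γ)) * Q) := by
      rw [hsub]
      have e : s * (-((2 - s) / (2 * γ)) * Q) =
          (1 / (2 * γ)) * ((1 - s) ^ 2 * Q) - (1 / (2 * γ)) * Q := by
        field_simp; ring
      rw [e]
      linarith
    exact (mul_le_mul_iff_right₀ hs0).mp hmul
  -- Take the limit s → 0⁺
  have key : ⟪gt, δ⟫ ≤ -(1 / γ) * Q := by
    have tend : Filter.Tendsto (fun s : ℝ => -((2 - s) / (2 * γ)) * Q) (nhdsWithin 0 (Set.Ioi 0))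
        (nhds (-((2 - 0) / (2 * γ)) * Q)) := by
      apply Filter.Tendsto.mono_left _ nhdsWithin_le_nhds
      exact (Continuous.tendsto
        ((((continuous_const.sub continuous_id).div_const (2 * γ)).neg).mul continuous_const) 0)
    have heq : -((2 - (0 : ℝ)) / (2 * γ)) * Q = -(1 / γ) * Q := by
      rw [sub_zero]
      congr 1
      rw [neg_inj]
      rw [div_eq_div_iff (by positivity) (by positivity)]
      ring
    rw [heq] at tend
    refine ge_of_tendsto tend ?_
    filter_upwards [Ioc_mem_nhdsGT_of_mem (Set.mem_Ico.mpr ⟨le_refl 0, zero_lt_one⟩)] with s hs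
    exact step s hs.1 hs.2
  -- Descent lemma
  have hδ1 : xt1 - xt = μ • δ := by rw [hxt1, hδ]; module
  have hd := descent_lemma f gf hf L hL.le hsmooth xt xt1
  rw [hδ1] at hd
  rw [real_inner_smul_right] at hd
  have hnorm : ‖μ • δ‖ ^ 2 = μ ^ 2 * ‖δ‖ ^ 2 := by
    rw [norm_smul, Real.norm_eq_abs, abs_of_pos hμ0, mul_pow]
  rw [hnorm] at hd
  have hsplit : (⟪gf xt, δ⟫ : ℝ) = ⟪gf xt - gt, δ⟫ + ⟪gt, δ⟫ := by
    rw [inner_sub_left]; ring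
  have hcs : (⟪gf xt - gt, δ⟫ : ℝ) ≤ ‖gf xt - gt‖ * ‖δ‖ := real_inner_le_norm _ _
  set a := ‖gf xt - gt‖ with ha
  set b := ‖δ‖ with hb
  -- Final arithmetic
  have hγinn : γ * ⟪gt, δ⟫ ≤ -Q := by
    have := mul_le_mul_of_nonneg_left key hγ0.le
    calc γ * ⟪gt, δ⟫ ≤ γ * (-(1 / γ) * Q) := this
      _ = -Q := by field_simp
  have hγmul : γ * (2 * L * μ) ≤ ρ := (le_div_iff₀ (by positivity)).mp hγ
  have harith : μ * (a * b + ⟪gt, δ⟫) + L / 2 * (μ ^ 2 * b ^ 2)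
      ≤ μ * γ / ρ * a ^ 2 - ρ * μ / (2 * γ) * b ^ 2 := by
    have h1 : μ * γ / ρ * a ^ 2 - ρ * μ / (2 * γ) * b ^ 2
        = (2 * γ ^ 2 * μ * a ^ 2 - ρ ^ 2 * μ * b ^ 2) / (2 * γ * ρ) := by
      field_simp
    rw [h1, le_div_iff₀ (by positivity)]
    nlinarith [mul_nonneg hμ0.le (sq_nonneg (2 * γ * a - ρ * b)),
      mul_le_mul_of_nonneg_left hγinn (by positivity : (0:ℝ) ≤ 2 * ρ * μ),
      mul_le_mul_of_nonneg_left hQρ (by positivity : (0:ℝ) ≤ 2 * ρ * μ),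
      mul_le_mul_of_nonneg_left hγmul (by positivity : (0:ℝ) ≤ ρ * μ * b ^ 2 / 2)]
  have : μ * ⟪gf xt, δ⟫ ≤ μ * (a * b + ⟪gt, δ⟫) := by
    rw [hsplit]
    apply mul_le_mul_of_nonneg_left _ hμ0.le
    linarith
  linarith
end

section
/- Let f(x) = E_{ξ∼D}[f(x;ξ)] where for every ξ the map x ↦ f(x;ξ) is differentiable and L-smooth, E_ξ[∇f(x;ξ)] = ∇f(x) and E_ξ‖∇f(x;ξ) − ∇f(x)‖² ≤ σ² for all x. Let x_t, x̃_{t+1}, g_t be random vectors in ℝ^d, let 0 < μ_t ≤ 1 and 0 < α_{t+1} ≤ 1, set x_{t+1} = x_t + μ_t (x̃_{t+1} − x_t), let ξ_{t+1} ∼ D be independent of (x_t, x̃_{t+1}, g_t), and define g_{t+1} = ∇f(x_{t+1}; ξ_{t+1}) + (1 − α_{t+1}) (g_t − ∇f(x_t; ξ_{t+1})). Then E‖∇f(x_{t+1}) − g_{t+1}‖² ≤ (1 − α_{t+1})² E‖∇f(x_t) − g_t‖² + 2 (1 − α_{t+1})² L² μ_t² E‖x̃_{t+1} − x_t‖² +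 2 α_{t+1}² σ². -/
open scoped RealInnerProductSpace
open MeasureTheory ProbabilityTheory

set_option maxHeartbeats 1000000 in
lemma statement3_inner_key {d : ℕ} {Ξ : Type*} [MeasurableSpace Ξ] (D : Measure Ξ)
    [IsProbabilityMeasure D]
    (gS : Ξ → EuclideanSpace ℝ (Fin d) → EuclideanSpace ℝ (Fin d))
    (gf : EuclideanSpace ℝ (Fin d) → EuclideanSpace ℝ (Fin d))
    (L σ α : ℝ) (hL : 0 ≤ L) (hσ : 0 ≤ σ) (hα0 : 0 < α) (hα1 : α ≤ 1)
    (hsmooth : ∀ ξ (x y : EuclideanSpace ℝ (Fin d)), ‖gS ξ x - gS ξ y‖ ≤ L * ‖x - y‖)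
    (hunbiased : ∀ x, ∫ ξ, gS ξ x ∂D = gf x)
    (hvar : ∀ x, ∫ ξ, ‖gS ξ x - gf x‖ ^ 2 ∂D ≤ σ ^ 2)
    (hmeas : ∀ x, Measurable fun s => gS s x)
    (x0 x1 c : EuclideanSpace ℝ (Fin d))
    (hT2 : Integrable (fun s => ‖gf x1 - (gS s x1 + (1 - α) • (c - gS s x0))‖ ^ 2) D) :
    ∫ s, ‖gf x1 - (gS s x1 + (1 - α) • (c - gS s x0))‖ ^ 2 ∂D
      ≤ (1 - α) ^ 2 * ‖gf x0 - c‖ ^ 2 + 2 * (1 - α) ^ 2 * L ^ 2 * ‖x1 - x0‖ ^ 2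
        + 2 * α ^ 2 * σ ^ 2 := by
  set A : EuclideanSpace ℝ (Fin d) := (1 - α) • (gf x0 - c) with hA
  set W1 : Ξ → EuclideanSpace ℝ (Fin d) := fun s => gf x1 - gS s x1 with hW1def
  set Y : Ξ → EuclideanSpace ℝ (Fin d) := fun s => gS s x0 - gS s x1 with hYdef
  set m : EuclideanSpace ℝ (Fin d) := gf x0 - gf x1 with hm
  set Z : Ξ → EuclideanSpace ℝ (Fin d) := fun s => Y s - m with hZdef
  set B : Ξ → EuclideanSpace ℝ (Fin d) := fun s => (1 - α) • Z s + α • W1 s with hBdef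
  have h1α : (0:ℝ) ≤ 1 - α := by linarith
  -- the integrand is ‖A + B s‖²
  have hTAB : ∀ s, gf x1 - (gS s x1 + (1 - α) • (c - gS s x0)) = A + B s := by
    intro s
    simp only [hA, hBdef, hZdef, hYdef, hW1def, hm]
    module
  -- measurability
  have hW1m : Measurable W1 := measurable_const.sub (hmeas x1)
  have hYm : Measurable Y := (hmeas x0).sub (hmeas x1)
  have hZm : Measurable Z := hYm.sub measurable_const
  have hBm : Measurable B := ((hZm.const_smul (1 - α))).add (hW1m.const_smul α)
  -- bounds
  have hYb : ∀ s, ‖Y s‖ ≤ L * ‖x0 - x1‖ := fun s => hsmooth s x0 x1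
  have hZb : ∀ s, ‖Z s‖ ≤ L * ‖x0 - x1‖ + ‖m‖ := fun s => by
    calc ‖Y s - m‖ ≤ ‖Y s‖ + ‖m‖ := norm_sub_le _ _
    _ ≤ L * ‖x0 - x1‖ + ‖m‖ := by linarith [hYb s]
  -- integrabilities
  have hYint : Integrable Y D :=
    Integrable.mono' (integrable_const (L * ‖x0 - x1‖)) hYm.aestronglyMeasurable
      (Filter.Eventually.of_forall hYb)
  have hZint : Integrable Z D := hYint.sub (integrable_const m)
  have hYsq : Integrable (fun s => ‖Y s‖ ^ 2) D :=
    Integrable.mono' (integrable_const ((L * ‖x0 - x1‖) ^ 2))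
      ((hYm.norm.pow_const 2).aestronglyMeasurable)
      (Filter.Eventually.of_forall fun s => by
        simp only [norm_pow, norm_norm]
        have h0 : (0:ℝ) ≤ ‖Y s‖ := norm_nonneg _
        nlinarith [hYb s])
  have hZsq : Integrable (fun s => ‖Z s‖ ^ 2) D :=
    Integrable.mono' (integrable_const ((L * ‖x0 - x1‖ + ‖m‖) ^ 2))
      ((hZm.norm.pow_const 2).aestronglyMeasurable)
      (Filter.Eventually.of_forall fun s => by
        simp only [norm_pow, norm_norm]
        have h0 : (0:ℝ) ≤ ‖Z s‖ := norm_nonneg _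
        nlinarith [hZb s])
  -- W1 in L² from hT2
  set K : ℝ := ‖A‖ + (L * ‖x0 - x1‖ + ‖m‖) with hK
  have hW1b : ∀ s, ‖W1 s‖ ≤ α⁻¹ * (‖gf x1 - (gS s x1 + (1 - α) • (c - gS s x0))‖ + K) := by
    intro s
    have hW1eq : W1 s = α⁻¹ • ((A + B s) - A - (1 - α) • Z s) := by
      have h : (A + B s) - A - (1 - α) • Z s = α • W1 s := by
        simp only [hBdef]; module
      rw [h, smul_smul, inv_mul_cancel₀ (ne_of_gt hα0), one_smul]
    rw [hTAB s, hW1eq, norm_smul]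
    have hle : ‖(A + B s) - A - (1 - α) • Z s‖ ≤ ‖A + B s‖ + K := by
      calc ‖(A + B s) - A - (1 - α) • Z s‖ ≤ ‖(A + B s) - A‖ + ‖(1 - α) • Z s‖ :=
            norm_sub_le _ _
      _ ≤ (‖A + B s‖ + ‖A‖) + ‖Z s‖ := by
          have h2 : ‖(1 - α) • Z s‖ = (1 - α) * ‖Z s‖ := by
            rw [norm_smul, Real.norm_eq_abs, abs_of_nonneg h1α]
          have h3 : (1 - α) * ‖Z s‖ ≤ ‖Z s‖ := by nlinarith [norm_nonneg (Z s)]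
          linarith [norm_sub_le (A + B s) A, h2.le.trans h3]
      _ ≤ ‖A + B s‖ + K := by simp only [hK]; linarith [hZb s]
    have hαinv : (0:ℝ) ≤ α⁻¹ := by positivity
    rw [Real.norm_eq_abs, abs_of_nonneg hαinv]
    exact mul_le_mul_of_nonneg_left hle hαinv
  have hW1sq : Integrable (fun s => ‖W1 s‖ ^ 2) D := by
    refine Integrable.mono' ((hT2.add (integrable_const (K ^ 2))).const_mul (2 * α⁻¹ ^ 2))
      ((hW1m.norm.pow_const 2).aestronglyMeasurable)
      (Filter.Eventually.of_forall fun s => ?_)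
    have h := hW1b s
    set t : ℝ := ‖gf x1 - (gS s x1 + (1 - α) • (c - gS s x0))‖ with ht
    have h0 : (0:ℝ) ≤ ‖W1 s‖ := norm_nonneg _
    have h1 : (0:ℝ) ≤ t := norm_nonneg _
    have hαinv : (0:ℝ) < α⁻¹ := by positivity
    simp only [norm_pow, norm_norm]
    have h2 : ‖W1 s‖ ^ 2 ≤ (α⁻¹ * (t + K)) ^ 2 := by
      apply pow_le_pow_left₀ h0 h
    have h3 : (t + K) ^ 2 ≤ 2 * (t ^ 2 + K ^ 2) := by nlinarith [sq_nonneg (t - K)]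
    calc ‖W1 s‖ ^ 2 ≤ (α⁻¹ * (t + K)) ^ 2 := h2
      _ = α⁻¹ ^ 2 * (t + K) ^ 2 := by ring
      _ ≤ α⁻¹ ^ 2 * (2 * (t ^ 2 + K ^ 2)) := by
          exact mul_le_mul_of_nonneg_left h3 (by positivity)
      _ = 2 * α⁻¹ ^ 2 * (t ^ 2 + K ^ 2) := by ring
  have hW1int : Integrable W1 D :=
    Integrable.mono' ((integrable_const (1:ℝ)).add hW1sq) hW1m.aestronglyMeasurable
      (Filter.Eventually.of_forall fun s => by
        have h0 : (0:ℝ) ≤ ‖W1 s‖ := norm_nonneg _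
        simp only [Pi.add_apply]
        nlinarith [sq_nonneg (‖W1 s‖ - 1)])
  have hgSx1int : Integrable (fun s => gS s x1) D := by
    have h : (fun s => gS s x1) = fun s => gf x1 - W1 s := by
      funext s; simp [hW1def]
    rw [h]; exact (integrable_const _).sub hW1int
  have hgSx0int : Integrable (fun s => gS s x0) D := by
    have h : (fun s => gS s x0) = fun s => Y s + gS s x1 := by
      funext s; simp [hYdef]
    rw [h]; exact hYint.add hgSx1int
  -- first moments
  have hintW1 : ∫ s, W1 s ∂D = 0 := by
    rw [hW1def]
    rw [integral_sub (integrable_const _) hgSx1int, integral_const, hunbiased x1]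
    simp
  have hintY : ∫ s, Y s ∂D = m := by
    rw [hYdef, integral_sub hgSx0int hgSx1int, hunbiased x0, hunbiased x1]
  have hintZ : ∫ s, Z s ∂D = 0 := by
    rw [hZdef, integral_sub hYint (integrable_const m), hintY, integral_const]
    simp
  have hBint : Integrable B D := (hZint.smul (1 - α)).add (hW1int.smul α)
  have hintB : ∫ s, B s ∂D = 0 := by
    rw [hBdef]
    have h := integral_add (hZint.smul (1 - α)) (hW1int.smul α)
    simp only [Pi.smul_apply] at h
    rw [h, integral_smul, integral_smul, hintZ, hintW1]
    simp
  -- inner product term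
  have hinner : Integrable (fun s => ⟪A, B s⟫) D := by
    refine Integrable.mono' (hBint.norm.const_mul ‖A‖)
      (AEStronglyMeasurable.inner aestronglyMeasurable_const hBint.1)
      (Filter.Eventually.of_forall fun s => ?_)
    simpa using abs_real_inner_le_norm A (B s)
  have hintinner : ∫ s, ⟪A, B s⟫ ∂D = 0 := by
    rw [integral_inner hBint A, hintB, inner_zero_right]
  -- B squared bound
  have hBsqle : ∀ s, ‖B s‖ ^ 2 ≤ 2 * (1 - α) ^ 2 * ‖Z s‖ ^ 2 + 2 * α ^ 2 * ‖W1 s‖ ^ 2 := by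
    intro s
    have h1 : ‖B s‖ ≤ (1 - α) * ‖Z s‖ + α * ‖W1 s‖ := by
      calc ‖B s‖ ≤ ‖(1 - α) • Z s‖ + ‖α • W1 s‖ := norm_add_le _ _
      _ = (1 - α) * ‖Z s‖ + α * ‖W1 s‖ := by
          rw [norm_smul, norm_smul, Real.norm_eq_abs, Real.norm_eq_abs,
            abs_of_nonneg h1α, abs_of_nonneg hα0.le]
    have h0 : (0:ℝ) ≤ ‖B s‖ := norm_nonneg _
    nlinarith [sq_nonneg ((1 - α) * ‖Z s‖ - α * ‖W1 s‖), norm_nonneg (Z s),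
      norm_nonneg (W1 s), mul_nonneg h1α (norm_nonneg (Z s)),
      mul_nonneg hα0.le (norm_nonneg (W1 s))]
  have hBsq : Integrable (fun s => ‖B s‖ ^ 2) D := by
    refine Integrable.mono' ((hZsq.const_mul (2 * (1 - α) ^ 2)).add
      (hW1sq.const_mul (2 * α ^ 2))) ((hBm.norm.pow_const 2).aestronglyMeasurable)
      (Filter.Eventually.of_forall fun s => ?_)
    simp only [norm_pow, norm_norm]
    exact hBsqle s
  -- variance of Y : ∫ ‖Z‖² ≤ ∫ ‖Y‖²
  have hZvar : ∫ s, ‖Z s‖ ^ 2 ∂D ≤ L ^ 2 * ‖x1 - x0‖ ^ 2 := by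
    have hexp : ∀ s, ‖Z s‖ ^ 2 = ‖Y s‖ ^ 2 - 2 * ⟪Y s, m⟫ + ‖m‖ ^ 2 := fun s =>
      norm_sub_sq_real (Y s) m
    have hinnerY : Integrable (fun s => ⟪Y s, m⟫) D := by
      have h : (fun s => ⟪Y s, m⟫) = fun s => ⟪m, Y s⟫ := by
        funext s; exact real_inner_comm _ _
      rw [h]
      refine Integrable.mono' (hYint.norm.const_mul ‖m‖)
        (AEStronglyMeasurable.inner aestronglyMeasurable_const hYint.1)
        (Filter.Eventually.of_forall fun s => ?_)
      simpa using abs_real_inner_le_norm m (Y s)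
    have hintinnerY : ∫ s, ⟪Y s, m⟫ ∂D = ‖m‖ ^ 2 := by
      have h : (fun s => ⟪Y s, m⟫) = fun s => ⟪m, Y s⟫ := by
        funext s; exact real_inner_comm _ _
      rw [h, integral_inner hYint m, hintY, real_inner_self_eq_norm_sq]
    have hYsqle : ∫ s, ‖Y s‖ ^ 2 ∂D ≤ L ^ 2 * ‖x1 - x0‖ ^ 2 := by
      have := integral_mono hYsq (integrable_const ((L * ‖x0 - x1‖) ^ 2))
        (fun s => by have h0 : (0:ℝ) ≤ ‖Y s‖ := norm_nonneg _; nlinarith [hYb s])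
      rw [integral_const] at this
      simp only [measure_univ, probReal_univ, ENNReal.toReal_one, one_smul, smul_eq_mul, one_mul] at this
      calc ∫ s, ‖Y s‖ ^ 2 ∂D ≤ (L * ‖x0 - x1‖) ^ 2 := this
        _ = L ^ 2 * ‖x1 - x0‖ ^ 2 := by rw [norm_sub_rev]; ring
    calc ∫ s, ‖Z s‖ ^ 2 ∂D
        = ∫ s, (‖Y s‖ ^ 2 - 2 * ⟪Y s, m⟫ + ‖m‖ ^ 2) ∂D := by
          exact integral_congr_ae (Filter.Eventually.of_forall hexp)
      _ = (∫ s, (‖Y s‖ ^ 2 - 2 * ⟪Y s, m⟫) ∂D) + ∫ s, (‖m‖ ^ 2 : ℝ) ∂D :=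
          integral_add (hYsq.sub (hinnerY.const_mul 2)) (integrable_const _)
      _ = (∫ s, ‖Y s‖ ^ 2 ∂D) - 2 * ∫ s, ⟪Y s, m⟫ ∂D + ‖m‖ ^ 2 := by
          rw [integral_sub hYsq (hinnerY.const_mul 2), integral_const_mul, integral_const]
          simp
      _ = (∫ s, ‖Y s‖ ^ 2 ∂D) - ‖m‖ ^ 2 := by rw [hintinnerY]; ring
      _ ≤ L ^ 2 * ‖x1 - x0‖ ^ 2 := by nlinarith [sq_nonneg ‖m‖]
  -- variance bound on W1
  have hW1var : ∫ s, ‖W1 s‖ ^ 2 ∂D ≤ σ ^ 2 := by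
    have h : (fun s => ‖W1 s‖ ^ 2) = fun s => ‖gS s x1 - gf x1‖ ^ 2 := by
      funext s; rw [hW1def]; rw [norm_sub_rev]
    rw [h]; exact hvar x1
  -- put everything together
  have hsplit : ∫ s, ‖gf x1 - (gS s x1 + (1 - α) • (c - gS s x0))‖ ^ 2 ∂D
      = ‖A‖ ^ 2 + 2 * ∫ s, ⟪A, B s⟫ ∂D + ∫ s, ‖B s‖ ^ 2 ∂D := by
    have hexp : ∀ s, ‖gf x1 - (gS s x1 + (1 - α) • (c - gS s x0))‖ ^ 2
        = ‖A‖ ^ 2 + 2 * ⟪A, B s⟫ + ‖B s‖ ^ 2 := fun s => by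
      rw [hTAB s]; exact norm_add_sq_real A (B s)
    calc ∫ s, ‖gf x1 - (gS s x1 + (1 - α) • (c - gS s x0))‖ ^ 2 ∂D
        = ∫ s, (‖A‖ ^ 2 + 2 * ⟪A, B s⟫ + ‖B s‖ ^ 2) ∂D :=
          integral_congr_ae (Filter.Eventually.of_forall hexp)
      _ = (∫ s, (‖A‖ ^ 2 + 2 * ⟪A, B s⟫ : ℝ) ∂D) + ∫ s, ‖B s‖ ^ 2 ∂D :=
          integral_add ((integrable_const _).add (hinner.const_mul 2)) hBsq
      _ = ‖A‖ ^ 2 + 2 * ∫ s, ⟪A, B s⟫ ∂D + ∫ s, ‖B s‖ ^ 2 ∂D := by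
          rw [integral_add (integrable_const _) (hinner.const_mul 2), integral_const,
            integral_const_mul]
          simp
  have hBsqint : ∫ s, ‖B s‖ ^ 2 ∂D
      ≤ 2 * (1 - α) ^ 2 * (L ^ 2 * ‖x1 - x0‖ ^ 2) + 2 * α ^ 2 * σ ^ 2 := by
    have h1 : ∫ s, ‖B s‖ ^ 2 ∂D
        ≤ ∫ s, (2 * (1 - α) ^ 2 * ‖Z s‖ ^ 2 + 2 * α ^ 2 * ‖W1 s‖ ^ 2) ∂D :=
      integral_mono hBsq ((hZsq.const_mul _).add (hW1sq.const_mul _)) hBsqle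
    have h2 : ∫ s, (2 * (1 - α) ^ 2 * ‖Z s‖ ^ 2 + 2 * α ^ 2 * ‖W1 s‖ ^ 2) ∂D
        = 2 * (1 - α) ^ 2 * (∫ s, ‖Z s‖ ^ 2 ∂D) + 2 * α ^ 2 * ∫ s, ‖W1 s‖ ^ 2 ∂D := by
      rw [integral_add (hZsq.const_mul _) (hW1sq.const_mul _), integral_const_mul,
        integral_const_mul]
    have h3 : 2 * (1 - α) ^ 2 * (∫ s, ‖Z s‖ ^ 2 ∂D) ≤ 2 * (1 - α) ^ 2 * (L ^ 2 * ‖x1 - x0‖ ^ 2) :=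
      mul_le_mul_of_nonneg_left hZvar (by positivity)
    have h4 : 2 * α ^ 2 * (∫ s, ‖W1 s‖ ^ 2 ∂D) ≤ 2 * α ^ 2 * σ ^ 2 :=
      mul_le_mul_of_nonneg_left hW1var (by positivity)
    linarith
  have hAnorm : ‖A‖ ^ 2 = (1 - α) ^ 2 * ‖gf x0 - c‖ ^ 2 := by
    rw [hA, norm_smul, Real.norm_eq_abs, abs_of_nonneg h1α, mul_pow]
  rw [hsplit, hintinner, hAnorm]
  linarith

set_option maxHeartbeats 1000000 in
/-- Lemma 4 in SUPER-ADAM, variance bound of the STORM estimator: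
with `f(x) = E_ξ[f(x;ξ)]`, each `f(·;ξ)` differentiable and `L`-smooth, unbiased
stochastic gradients with variance `≤ σ²`, random vectors `x_t, x̃_{t+1}, g_t`,
`0 < μ_t ≤ 1`, `0 < α_{t+1} ≤ 1`, `x_{t+1} = x_t + μ_t(x̃_{t+1} − x_t)`,
`ξ_{t+1} ∼ D` independent of `(x_t, x̃_{t+1}, g_t)`, and
`g_{t+1} = ∇f(x_{t+1};ξ_{t+1}) + (1 − α_{t+1})(g_t − ∇f(x_t;ξ_{t+1}))`, one has
`E‖∇f(x_{t+1}) − g_{t+1}‖² ≤ (1 − α_{t+1})² E‖∇f(x_t) − g_t‖²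
  + 2(1 − α_{t+1})² L² μ_t² E‖x̃_{t+1} − x_t‖² + 2 α_{t+1}² σ²`. -/
theorem statement3 {d : ℕ} {Ω : Type*} [MeasurableSpace Ω] (P : Measure Ω)
    [IsProbabilityMeasure P] {Ξ : Type*} [MeasurableSpace Ξ] (D : Measure Ξ)
    [IsProbabilityMeasure D]
    (fS : Ξ → EuclideanSpace ℝ (Fin d) → ℝ)
    (gS : Ξ → EuclideanSpace ℝ (Fin d) → EuclideanSpace ℝ (Fin d))
    (f : EuclideanSpace ℝ (Fin d) → ℝ)
    (gf : EuclideanSpace ℝ (Fin d) → EuclideanSpace ℝ (Fin d))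
    (L σ : ℝ) (hL : 0 < L) (hσ : 0 ≤ σ)
    (hf : ∀ x, f x = ∫ ξ, fS ξ x ∂D)
    (hgS : ∀ ξ x, HasGradientAt (fS ξ) (gS ξ x) x)
    (hgf : ∀ x, HasGradientAt f (gf x) x)
    (hsmooth : ∀ ξ (x y : EuclideanSpace ℝ (Fin d)), ‖gS ξ x - gS ξ y‖ ≤ L * ‖x - y‖)
    (hunbiased : ∀ x, ∫ ξ, gS ξ x ∂D = gf x)
    (hvar : ∀ x, ∫ ξ, ‖gS ξ x - gf x‖ ^ 2 ∂D ≤ σ ^ 2)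
    (hgSmeas : Measurable (Function.uncurry gS))
    (xt xtil gt : Ω → EuclideanSpace ℝ (Fin d)) (ξ1 : Ω → Ξ)
    (hxtmeas : Measurable xt) (hxtilmeas : Measurable xtil)
    (hgtmeas : Measurable gt) (hξmeas : Measurable ξ1)
    (μ α : ℝ) (hμ0 : 0 < μ) (hμ1 : μ ≤ 1) (hα0 : 0 < α) (hα1 : α ≤ 1)
    (xt1 : Ω → EuclideanSpace ℝ (Fin d))
    (hxt1 : ∀ ω, xt1 ω = xt ω + μ • (xtil ω - xt ω))
    (hlaw : Measure.map ξ1 P = D)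
    (hindep : IndepFun (fun ω => (xt ω, xtil ω, gt ω)) ξ1 P)
    (gt1 : Ω → EuclideanSpace ℝ (Fin d))
    (hgt1 : ∀ ω, gt1 ω = gS (ξ1 ω) (xt1 ω) + (1 - α) • (gt ω - gS (ξ1 ω) (xt ω)))
    (hint0 : Integrable (fun ω => ‖gf (xt ω) - gt ω‖ ^ 2) P)
    (hint1 : Integrable (fun ω => ‖gf (xt1 ω) - gt1 ω‖ ^ 2) P)
    (hint2 : Integrable (fun ω => ‖xtil ω - xt ω‖ ^ 2) P) :
    ∫ ω, ‖gf (xt1 ω) - gt1 ω‖ ^ 2 ∂P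
      ≤ (1 - α) ^ 2 * ∫ ω, ‖gf (xt ω) - gt ω‖ ^ 2 ∂P
        + 2 * (1 - α) ^ 2 * L ^ 2 * μ ^ 2 * ∫ ω, ‖xtil ω - xt ω‖ ^ 2 ∂P
        + 2 * α ^ 2 * σ ^ 2 := by
  have hmeasx : ∀ x, Measurable fun s => gS s x :=
    fun x => hgSmeas.comp (measurable_id.prodMk measurable_const)
  have hgfmeas : Measurable gf := by
    have h : gf = fun x => ∫ s, gS s x ∂D := funext fun x => (hunbiased x).symm
    rw [h]
    exact ((hgSmeas.comp measurable_swap).stronglyMeasurable.integral_prod_right').measurable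
  set X : Ω → (EuclideanSpace ℝ (Fin d) × EuclideanSpace ℝ (Fin d) × EuclideanSpace ℝ (Fin d)) :=
    fun ω => (xt ω, xtil ω, gt ω) with hXdef
  have hXmeas : Measurable X := hxtmeas.prodMk (hxtilmeas.prodMk hgtmeas)
  set T : Ω → ((EuclideanSpace ℝ (Fin d) × EuclideanSpace ℝ (Fin d) × EuclideanSpace ℝ (Fin d)) × Ξ) :=
    fun ω => (X ω, ξ1 ω) with hTdef
  have hTmeas : Measurable T := hXmeas.prodMk hξmeas
  have hmapprod : P.map T = (P.map X).prod D := by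
    rw [← hlaw]
    exact (indepFun_iff_map_prod_eq_prod_map_map hXmeas.aemeasurable hξmeas.aemeasurable).mp hindep
  set ν : Measure (EuclideanSpace ℝ (Fin d) × EuclideanSpace ℝ (Fin d) × EuclideanSpace ℝ (Fin d)) :=
    P.map X with hνdef
  have hνprob : IsProbabilityMeasure ν := Measure.isProbabilityMeasure_map hXmeas.aemeasurable
  set x1e : (EuclideanSpace ℝ (Fin d) × EuclideanSpace ℝ (Fin d) × EuclideanSpace ℝ (Fin d)) →
      EuclideanSpace ℝ (Fin d) := fun p => p.1 + μ • (p.2.1 - p.1) with hx1edef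
  have hx1emeas : Measurable x1e :=
    measurable_fst.add ((measurable_snd.fst.sub measurable_fst).const_smul μ)
  set G : ((EuclideanSpace ℝ (Fin d) × EuclideanSpace ℝ (Fin d) × EuclideanSpace ℝ (Fin d)) × Ξ) → ℝ :=
    fun q => ‖gf (x1e q.1) - (gS q.2 (x1e q.1) + (1 - α) • (q.1.2.2 - gS q.2 q.1.1))‖ ^ 2
    with hGdef
  have ha : Measurable fun q : ((EuclideanSpace ℝ (Fin d) × EuclideanSpace ℝ (Fin d) × EuclideanSpace ℝ (Fin d)) × Ξ) => x1e q.1 :=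
    hx1emeas.comp measurable_fst
  have hGmeas : Measurable G := by
    refine Measurable.pow_const (Measurable.norm ?_) 2
    refine Measurable.sub (hgfmeas.comp ha) ?_
    refine Measurable.add (hgSmeas.comp (measurable_snd.prodMk ha)) ?_
    exact (measurable_fst.snd.snd.sub (hgSmeas.comp (measurable_snd.prodMk measurable_fst.fst))).const_smul (1 - α)
  have hGcomp : ∀ ω, G (T ω) = ‖gf (xt1 ω) - gt1 ω‖ ^ 2 := by
    intro ω
    simp only [hGdef, hTdef, hXdef, hx1edef, hxt1 ω, hgt1 ω]
  have hint1' : Integrable G (ν.prod D) := by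
    rw [hνdef, ← hmapprod]
    refine (integrable_map_measure hGmeas.aestronglyMeasurable hTmeas.aemeasurable).mpr ?_
    have h : G ∘ T = fun ω => ‖gf (xt1 ω) - gt1 ω‖ ^ 2 := funext hGcomp
    rw [h]; exact hint1
  have hLHS : ∫ ω, ‖gf (xt1 ω) - gt1 ω‖ ^ 2 ∂P = ∫ q, G q ∂(ν.prod D) := by
    rw [hνdef, ← hmapprod, integral_map hTmeas.aemeasurable hGmeas.aestronglyMeasurable]
    exact integral_congr_ae (Filter.Eventually.of_forall fun ω => (hGcomp ω).symm)
  rw [hLHS, MeasureTheory.integral_prod _ hint1']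
  set R : (EuclideanSpace ℝ (Fin d) × EuclideanSpace ℝ (Fin d) × EuclideanSpace ℝ (Fin d)) → ℝ :=
    fun p => (1 - α) ^ 2 * ‖gf p.1 - p.2.2‖ ^ 2
      + 2 * (1 - α) ^ 2 * L ^ 2 * μ ^ 2 * ‖p.2.1 - p.1‖ ^ 2 + 2 * α ^ 2 * σ ^ 2 with hRdef
  have hF0meas : Measurable fun p : (EuclideanSpace ℝ (Fin d) × EuclideanSpace ℝ (Fin d) × EuclideanSpace ℝ (Fin d)) => ‖gf p.1 - p.2.2‖ ^ 2 :=
    (((hgfmeas.comp measurable_fst).sub measurable_snd.snd).norm).pow_const 2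
  have hF2meas : Measurable fun p : (EuclideanSpace ℝ (Fin d) × EuclideanSpace ℝ (Fin d) × EuclideanSpace ℝ (Fin d)) => ‖p.2.1 - p.1‖ ^ 2 :=
    ((measurable_snd.fst.sub measurable_fst).norm).pow_const 2
  have hF0int : Integrable (fun p : (EuclideanSpace ℝ (Fin d) × EuclideanSpace ℝ (Fin d) × EuclideanSpace ℝ (Fin d)) => ‖gf p.1 - p.2.2‖ ^ 2) ν := by
    rw [hνdef]
    refine (integrable_map_measure hF0meas.aestronglyMeasurable hXmeas.aemeasurable).mpr ?_
    exact hint0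
  have hF2int : Integrable (fun p : (EuclideanSpace ℝ (Fin d) × EuclideanSpace ℝ (Fin d) × EuclideanSpace ℝ (Fin d)) => ‖p.2.1 - p.1‖ ^ 2) ν := by
    rw [hνdef]
    refine (integrable_map_measure hF2meas.aestronglyMeasurable hXmeas.aemeasurable).mpr ?_
    exact hint2
  have hRint : Integrable R ν := by
    refine Integrable.add (Integrable.add ?_ ?_) (integrable_const _)
    · exact hF0int.const_mul _
    · exact hF2int.const_mul _
  have hae : ∀ᵐ p ∂ν, (∫ s, G (p, s) ∂D) ≤ R p := by
    filter_upwards [hint1'.prod_right_ae] with p hp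
    have key := statement3_inner_key D gS gf L σ α hL.le hσ hα0 hα1 hsmooth hunbiased hvar hmeasx
      p.1 (x1e p) p.2.2 hp
    have hnorm : ‖x1e p - p.1‖ ^ 2 = μ ^ 2 * ‖p.2.1 - p.1‖ ^ 2 := by
      have h1 : x1e p - p.1 = μ • (p.2.1 - p.1) := by
        simp only [hx1edef]; abel
      rw [h1, norm_smul, Real.norm_eq_abs, abs_of_nonneg hμ0.le, mul_pow]
    have h2 : (1 - α) ^ 2 * ‖gf p.1 - p.2.2‖ ^ 2 + 2 * (1 - α) ^ 2 * L ^ 2 * ‖x1e p - p.1‖ ^ 2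
        + 2 * α ^ 2 * σ ^ 2 = R p := by
      rw [hnorm, hRdef]; ring
    rw [← h2]
    exact key
  have hmono := integral_mono_ae hint1'.integral_prod_left hRint hae
  refine hmono.trans ?_
  have hI0 : ∫ p, ‖gf p.1 - p.2.2‖ ^ 2 ∂ν = ∫ ω, ‖gf (xt ω) - gt ω‖ ^ 2 ∂P := by
    rw [hνdef, integral_map hXmeas.aemeasurable hF0meas.aestronglyMeasurable]
  have hI2 : ∫ p, ‖p.2.1 - p.1‖ ^ 2 ∂ν = ∫ ω, ‖xtil ω - xt ω‖ ^ 2 ∂P := by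
    rw [hνdef, integral_map hXmeas.aemeasurable hF2meas.aestronglyMeasurable]
  have hsplit : ∫ p, R p ∂ν
      = (1 - α) ^ 2 * (∫ p, ‖gf p.1 - p.2.2‖ ^ 2 ∂ν)
        + 2 * (1 - α) ^ 2 * L ^ 2 * μ ^ 2 * (∫ p, ‖p.2.1 - p.1‖ ^ 2 ∂ν)
        + 2 * α ^ 2 * σ ^ 2 := by
    rw [hRdef]
    have hadd : Integrable (fun p : (EuclideanSpace ℝ (Fin d) × EuclideanSpace ℝ (Fin d) × EuclideanSpace ℝ (Fin d)) =>
        (1 - α) ^ 2 * ‖gf p.1 - p.2.2‖ ^ 2 + 2 * (1 - α) ^ 2 * L ^ 2 * μ ^ 2 * ‖p.2.1 - p.1‖ ^ 2) ν :=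
      (hF0int.const_mul _).add (hF2int.const_mul _)
    rw [integral_add hadd (integrable_const _),
      integral_add (hF0int.const_mul _) (hF2int.const_mul _), integral_const_mul, integral_const_mul,
      integral_const]
    simp [measure_univ]
  rw [hsplit, hI0, hI2]
end

section
/- Let f(x) = E_{ξ∼D}[f(x;ξ)] be differentiable and L-smooth, with E_ξ[∇f(x;ξ)] = ∇f(x) and E_ξ‖∇f(x;ξ) − ∇f(x)‖² ≤ σ² for all x. Let x_t, x̃_{t+1}, g_t be random vectors in ℝ^d, let 0 < μ_t ≤ 1 and 0 < α_{t+1} ≤ 1, set x_{t+1} = x_t + μ_t (x̃_{t+1} − x_t), let ξ_{t+1} ∼ D be independent of (x_t, x̃_{t+1}, g_t), and define g_{t+1} = (1 − α_{t+1}) g_t + α_{t+1} ∇f(x_{t+1}; ξ_{t+1}). Then E‖∇f(x_{t+1}) − g_{t+1}‖² ≤ (1 − α_{t+1}) E‖∇f(x_t) − g_t‖² + (1/α_{t+1}) L² μ_t² E‖x̃_{t+1} − x_t‖² + α_{t+1}² σ². -/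
open scoped RealInnerProductSpace
open MeasureTheory ProbabilityTheory

private lemma aux_scalar {α u v : ℝ} (hα0 : 0 < α) (hα1 : α ≤ 1) (hu : 0 ≤ u) (hv : 0 ≤ v) :
    (1-α)^2*(u+v)^2 ≤ (1-α)*u^2 + (1/α)*v^2 := by
  have hQ : 0 ≤ α*((1-α)*u^2) + v^2 - α*((1-α)^2*(u+v)^2) := by
    nlinarith [mul_nonneg (sub_nonneg.2 hα1) (sq_nonneg (α*u - (1-α)*v)),
      mul_nonneg (mul_nonneg hα0.le (by linarith : (0:ℝ) ≤ 2-α)) (sq_nonneg v)]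
  rw [← sub_nonneg]
  have heq : (1-α)*u^2 + (1/α)*v^2 - (1-α)^2*(u+v)^2
      = (α*((1-α)*u^2) + v^2 - α*((1-α)^2*(u+v)^2))/α := by
    field_simp
  rw [heq]
  exact div_nonneg hQ hα0.le

private lemma aux_sq {E : Type*} [NormedAddCommGroup E] [InnerProductSpace ℝ E]
    (a b : E) {α : ℝ} (hα0 : 0 < α) (hα1 : α ≤ 1) :
    ‖(1-α) • (a+b)‖^2 ≤ (1-α)*‖a‖^2 + (1/α)*‖b‖^2 := by
  have h1 : ‖(1-α) • (a+b)‖^2 = (1-α)^2*‖a+b‖^2 := by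
    rw [norm_smul, Real.norm_eq_abs, mul_pow, sq_abs]
  calc ‖(1-α) • (a+b)‖^2 = (1-α)^2*‖a+b‖^2 := h1
    _ ≤ (1-α)^2*(‖a‖+‖b‖)^2 :=
        mul_le_mul_of_nonneg_left (pow_le_pow_left₀ (norm_nonneg _) (norm_add_le a b) 2) (sq_nonneg _)
    _ ≤ (1-α)*‖a‖^2 + (1/α)*‖b‖^2 := aux_scalar hα0 hα1 (norm_nonneg a) (norm_nonneg b)

set_option maxHeartbeats 1000000 in
/-- Lemma 6 in SUPER-ADAM, variance bound of the momentum estimator: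
with `f(x) = E_ξ[f(x;ξ)]` differentiable and `L`-smooth, unbiased stochastic
gradients with variance `≤ σ²`, random vectors `x_t, x̃_{t+1}, g_t`, `0 < μ_t ≤ 1`,
`0 < α_{t+1} ≤ 1`, `x_{t+1} = x_t + μ_t(x̃_{t+1} − x_t)`, `ξ_{t+1} ∼ D` independent of
`(x_t, x̃_{t+1}, g_t)`, and `g_{t+1} = (1 − α_{t+1}) g_t + α_{t+1} ∇f(x_{t+1};ξ_{t+1})`,
one has `E‖∇f(x_{t+1}) − g_{t+1}‖² ≤ (1 − α_{t+1}) E‖∇f(x_t) − g_t‖²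
  + (1/α_{t+1}) L² μ_t² E‖x̃_{t+1} − x_t‖² + α_{t+1}² σ²`. -/
theorem statement4 {d : ℕ} {Ω : Type*} [MeasurableSpace Ω] (P : Measure Ω)
    [IsProbabilityMeasure P] {Ξ : Type*} [MeasurableSpace Ξ] (D : Measure Ξ)
    [IsProbabilityMeasure D]
    (fS : Ξ → EuclideanSpace ℝ (Fin d) → ℝ)
    (gS : Ξ → EuclideanSpace ℝ (Fin d) → EuclideanSpace ℝ (Fin d))
    (f : EuclideanSpace ℝ (Fin d) → ℝ)
    (gf : EuclideanSpace ℝ (Fin d) → EuclideanSpace ℝ (Fin d))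
    (L σ : ℝ) (hL : 0 < L) (hσ : 0 ≤ σ)
    (hf : ∀ x, f x = ∫ ξ, fS ξ x ∂D)
    (hgS : ∀ ξ x, HasGradientAt (fS ξ) (gS ξ x) x)
    (hgf : ∀ x, HasGradientAt f (gf x) x)
    (hsmooth : ∀ x y : EuclideanSpace ℝ (Fin d), ‖gf x - gf y‖ ≤ L * ‖x - y‖)
    (hunbiased : ∀ x, ∫ ξ, gS ξ x ∂D = gf x)
    (hvar : ∀ x, ∫ ξ, ‖gS ξ x - gf x‖ ^ 2 ∂D ≤ σ ^ 2)
    (hgSmeas : Measurable (Function.uncurry gS))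
    (xt xtil gt : Ω → EuclideanSpace ℝ (Fin d)) (ξ1 : Ω → Ξ)
    (hxtmeas : Measurable xt) (hxtilmeas : Measurable xtil)
    (hgtmeas : Measurable gt) (hξmeas : Measurable ξ1)
    (μ α : ℝ) (hμ0 : 0 < μ) (hμ1 : μ ≤ 1) (hα0 : 0 < α) (hα1 : α ≤ 1)
    (xt1 : Ω → EuclideanSpace ℝ (Fin d))
    (hxt1 : ∀ ω, xt1 ω = xt ω + μ • (xtil ω - xt ω))
    (hlaw : Measure.map ξ1 P = D)
    (hindep : IndepFun (fun ω => (xt ω, xtil ω, gt ω)) ξ1 P)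
    (gt1 : Ω → EuclideanSpace ℝ (Fin d))
    (hgt1 : ∀ ω, gt1 ω = (1 - α) • gt ω + α • gS (ξ1 ω) (xt1 ω))
    (hint0 : Integrable (fun ω => ‖gf (xt ω) - gt ω‖ ^ 2) P)
    (hint1 : Integrable (fun ω => ‖gf (xt1 ω) - gt1 ω‖ ^ 2) P)
    (hint2 : Integrable (fun ω => ‖xtil ω - xt ω‖ ^ 2) P) :
    ∫ ω, ‖gf (xt1 ω) - gt1 ω‖ ^ 2 ∂P
      ≤ (1 - α) * ∫ ω, ‖gf (xt ω) - gt ω‖ ^ 2 ∂P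
        + (1 / α) * L ^ 2 * μ ^ 2 * ∫ ω, ‖xtil ω - xt ω‖ ^ 2 ∂P
        + α ^ 2 * σ ^ 2 := by
  -- gf is Lipschitz, hence measurable
  have hgfc : Continuous gf := by
    have : LipschitzWith ⟨L, hL.le⟩ gf :=
      LipschitzWith.of_dist_le_mul fun x y => by
        rw [dist_eq_norm, dist_eq_norm]; exact hsmooth x y
    exact this.continuous
  have hgfm : Measurable gf := hgfc.measurable
  -- joint random vector and laws
  set X := fun ω => (xt ω, xtil ω, gt ω) with hX
  have hXm : Measurable X := hxtmeas.prodMk (hxtilmeas.prodMk hgtmeas)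
  set m := P.map X with hm
  haveI : IsProbabilityMeasure m := Measure.isProbabilityMeasure_map hXm.aemeasurable
  set ν := m.prod D with hν
  have hmapP : P.map (fun ω => (X ω, ξ1 ω)) = ν := by
    rw [hν, hm, ← hlaw]
    exact (indepFun_iff_map_prod_eq_prod_map_map hXm.aemeasurable hξmeas.aemeasurable).mp hindep
  -- functions on the state space
  set x1q := fun q : (EuclideanSpace ℝ (Fin d)) × (EuclideanSpace ℝ (Fin d)) × (EuclideanSpace ℝ (Fin d)) => q.1 + μ • (q.2.1 - q.1) with hx1q
  have hx1m : Measurable x1q := by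
    apply Measurable.add measurable_fst
    exact (measurable_snd.fst.sub measurable_fst).const_smul μ
  set Aq := fun q : (EuclideanSpace ℝ (Fin d)) × (EuclideanSpace ℝ (Fin d)) × (EuclideanSpace ℝ (Fin d)) => ‖gf q.1 - q.2.2‖^2 with hAq
  set Dq := fun q : (EuclideanSpace ℝ (Fin d)) × (EuclideanSpace ℝ (Fin d)) × (EuclideanSpace ℝ (Fin d)) => ‖q.2.1 - q.1‖^2 with hDq
  have hAqm : Measurable Aq :=
    (((hgfm.comp measurable_fst).sub measurable_snd.snd).norm).pow_const 2
  have hDqm : Measurable Dq :=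
    ((measurable_snd.fst.sub measurable_fst).norm).pow_const 2
  set T := fun p : ((EuclideanSpace ℝ (Fin d)) × (EuclideanSpace ℝ (Fin d)) × (EuclideanSpace ℝ (Fin d))) × Ξ =>
    gf (x1q p.1) - ((1-α) • p.1.2.2 + α • gS p.2 (x1q p.1)) with hT
  have hgSp : Measurable fun p : ((EuclideanSpace ℝ (Fin d)) × (EuclideanSpace ℝ (Fin d)) × (EuclideanSpace ℝ (Fin d))) × Ξ => gS p.2 (x1q p.1) := by
    have := hgSmeas.comp (measurable_snd.prodMk (hx1m.comp measurable_fst) :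
      Measurable fun p : ((EuclideanSpace ℝ (Fin d)) × (EuclideanSpace ℝ (Fin d)) × (EuclideanSpace ℝ (Fin d))) × Ξ => (p.2, x1q p.1))
    exact this
  have hTm : Measurable T := by
    apply Measurable.sub
    · exact hgfm.comp (hx1m.comp measurable_fst)
    · exact ((measurable_fst.snd.snd.const_smul ((1:ℝ)-α)).add (hgSp.const_smul α))
  have hT2m : Measurable fun p => ‖T p‖^2 := hTm.norm.pow_const 2
  have hXξm : Measurable fun ω => (X ω, ξ1 ω) := hXm.prodMk hξmeas
  -- pointwise identification
  have hpt : ∀ ω, ‖gf (xt1 ω) - gt1 ω‖^2 = ‖T (X ω, ξ1 ω)‖^2 := by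
    intro ω
    simp only [hT, hX, hx1q, hgt1, hxt1]
  -- transport the integral and integrability
  have hLHS : ∫ ω, ‖gf (xt1 ω) - gt1 ω‖^2 ∂P = ∫ p, ‖T p‖^2 ∂ν := by
    rw [← hmapP, integral_map hXξm.aemeasurable hT2m.aestronglyMeasurable]
    exact integral_congr_ae (Filter.Eventually.of_forall fun ω => hpt ω)
  have hTint : Integrable (fun p => ‖T p‖^2) ν := by
    rw [← hmapP]
    refine (integrable_map_measure hT2m.aestronglyMeasurable hXξm.aemeasurable).mpr ?_
    have : ((fun p => ‖T p‖^2) ∘ fun ω => (X ω, ξ1 ω)) = fun ω => ‖gf (xt1 ω) - gt1 ω‖^2 := by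
      funext ω; simp only [Function.comp]; rw [hpt ω]
    rw [this]; exact hint1
  have hAint : Integrable Aq m := by
    rw [hm]
    refine (integrable_map_measure hAqm.aestronglyMeasurable hXm.aemeasurable).mpr ?_
    exact hint0
  have hDint : Integrable Dq m := by
    rw [hm]
    refine (integrable_map_measure hDqm.aestronglyMeasurable hXm.aemeasurable).mpr ?_
    exact hint2
  -- a.e. fiberwise integrability
  have haefib : ∀ᵐ q ∂m, Integrable (fun ξ => ‖T (q, ξ)‖^2) D := hTint.prod_right_ae
  -- fiberwise bound
  have hbound : ∀ᵐ q ∂m, ∫ ξ, ‖T (q,ξ)‖^2 ∂D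
      ≤ (1-α)*Aq q + (1/α)*L^2*μ^2*Dq q + α^2*σ^2 := by
    filter_upwards [haefib] with q hq
    set x := x1q q with hxdef
    set c := (1-α) • (gf x - q.2.2) with hc
    set N := fun ξ => α • (gf x - gS ξ x) with hN
    have hTeq : ∀ ξ, T (q, ξ) = c + N ξ := by
      intro ξ
      simp only [hT, hc, hN, hxdef]
      module
    have hNm : Measurable N := by
      refine Measurable.const_smul (g := fun ξ => gf x - gS ξ x) ?_ α
      have : Measurable fun ξ => gS ξ x := by
        have := hgSmeas.comp ((measurable_id.prodMk measurable_const) : Measurable fun ξ : Ξ => (ξ, x))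
        exact this
      exact measurable_const.sub this
    have hq' : Integrable (fun ξ => ‖c + N ξ‖^2) D := by
      have : (fun ξ => ‖c + N ξ‖^2) = fun ξ => ‖T (q,ξ)‖^2 := by
        funext ξ; rw [hTeq]
      rw [this]; exact hq
    have hN2 : Integrable (fun ξ => ‖N ξ‖^2) D := by
      refine Integrable.mono' (g := fun ξ => 2*‖c + N ξ‖^2 + 2*‖c‖^2)
        ((hq'.const_mul 2).add (integrable_const _)) (hNm.norm.pow_const 2).aestronglyMeasurable ?_
      refine Filter.Eventually.of_forall fun ξ => ?_
      rw [Real.norm_eq_abs, abs_of_nonneg (sq_nonneg _)]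
      have h1 : ‖N ξ‖ ≤ ‖c + N ξ‖ + ‖c‖ := by
        calc ‖N ξ‖ = ‖(c + N ξ) - c‖ := by rw [add_sub_cancel_left]
          _ ≤ ‖c + N ξ‖ + ‖c‖ := norm_sub_le _ _
      beta_reduce
      nlinarith [norm_nonneg (N ξ), norm_nonneg (c + N ξ), norm_nonneg c, sq_nonneg (‖c + N ξ‖ - ‖c‖), h1]
    have hNint : Integrable N D := by
      refine Integrable.mono' (g := fun ξ => ‖N ξ‖^2 + 1)
        (hN2.add (integrable_const 1)) hNm.aestronglyMeasurable ?_
      refine Filter.Eventually.of_forall fun ξ => ?_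
      beta_reduce
      nlinarith [norm_nonneg (N ξ), sq_nonneg (‖N ξ‖ - 1)]
    have hgSint : Integrable (fun ξ => gS ξ x) D := by
      have heq : (fun ξ => gS ξ x) = fun ξ => gf x - (1/α) • N ξ := by
        funext ξ
        rw [hN, smul_smul, one_div, inv_mul_cancel₀ hα0.ne', one_smul, sub_sub_cancel]
      rw [heq]
      exact (integrable_const _).sub (hNint.fun_smul (1/α))
    have hNzero : ∫ ξ, N ξ ∂D = 0 := by
      rw [hN, integral_smul]
      rw [integral_sub (integrable_const _) hgSint, integral_const, probReal_univ,
        one_smul, hunbiased, sub_self, smul_zero]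
    have hinner : Integrable (fun ξ => 2 * ⟪c, N ξ⟫) D := (hNint.const_inner c).const_mul 2
    have hexp : ∫ ξ, ‖T (q,ξ)‖^2 ∂D = ‖c‖^2 + ∫ ξ, ‖N ξ‖^2 ∂D := by
      calc ∫ ξ, ‖T (q,ξ)‖^2 ∂D = ∫ ξ, (‖c‖^2 + 2*⟪c, N ξ⟫ + ‖N ξ‖^2) ∂D := by
            refine integral_congr_ae (Filter.Eventually.of_forall fun ξ => ?_)
            beta_reduce
            rw [hTeq, norm_add_sq_real]
        _ = (∫ _, ‖c‖^2 ∂D) + (∫ ξ, 2*⟪c, N ξ⟫ ∂D) + ∫ ξ, ‖N ξ‖^2 ∂D := by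
            have hi1 : Integrable (fun ξ => ‖c‖^2 + 2*⟪c, N ξ⟫) D := by
              exact (integrable_const _).add hinner
            rw [integral_add hi1 hN2, integral_add (integrable_const _) hinner]
        _ = ‖c‖^2 + ∫ ξ, ‖N ξ‖^2 ∂D := by
            have h2 : ∫ ξ, 2*⟪c, N ξ⟫ ∂D = 2 * ⟪c, ∫ ξ, N ξ ∂D⟫ := by
              rw [integral_const_mul, integral_inner hNint]
            rw [h2, hNzero, inner_zero_right, integral_const, probReal_univ,
              one_smul, mul_zero, add_zero]
    have hvarb : ∫ ξ, ‖N ξ‖^2 ∂D ≤ α^2 * σ^2 := by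
      have heq : (fun ξ => ‖N ξ‖^2) = fun ξ => α^2 * ‖gS ξ x - gf x‖^2 := by
        funext ξ
        rw [hN, norm_smul, Real.norm_eq_abs, mul_pow, sq_abs, norm_sub_rev]
      rw [heq, integral_const_mul]
      exact mul_le_mul_of_nonneg_left (hvar x) (sq_nonneg α)
    have hcb : ‖c‖^2 ≤ (1-α)*Aq q + (1/α)*(L^2*μ^2*Dq q) := by
      have hdecomp : c = (1-α) • ((gf q.1 - q.2.2) + (gf x - gf q.1)) := by
        rw [hc]; module
      have hbnorm : ‖gf x - gf q.1‖ ≤ L*μ*‖q.2.1 - q.1‖ := by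
        calc ‖gf x - gf q.1‖ ≤ L * ‖x - q.1‖ := hsmooth x q.1
          _ = L*μ*‖q.2.1 - q.1‖ := by
              rw [hxdef, hx1q]
              simp only [add_sub_cancel_left, norm_smul, Real.norm_eq_abs,
                abs_of_pos hμ0]
              ring
      have h1 : ‖c‖^2 ≤ (1-α)*‖gf q.1 - q.2.2‖^2 + (1/α)*‖gf x - gf q.1‖^2 := by
        rw [hdecomp]; exact aux_sq _ _ hα0 hα1
      have h2 : ‖gf x - gf q.1‖^2 ≤ L^2*μ^2*‖q.2.1 - q.1‖^2 := by
        have := pow_le_pow_left₀ (norm_nonneg _) hbnorm 2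
        calc ‖gf x - gf q.1‖^2 ≤ (L*μ*‖q.2.1 - q.1‖)^2 := this
          _ = L^2*μ^2*‖q.2.1 - q.1‖^2 := by ring
      have h3 : (1/α)*‖gf x - gf q.1‖^2 ≤ (1/α)*(L^2*μ^2*‖q.2.1 - q.1‖^2) :=
        mul_le_mul_of_nonneg_left h2 (by positivity)
      simp only [hAq, hDq]
      linarith
    have : (1/α)*(L^2*μ^2*Dq q) = (1/α)*L^2*μ^2*Dq q := by ring
    linarith [hexp, hvarb, hcb]
  -- assemble
  have hRHSint : Integrable (fun q => (1-α)*Aq q + (1/α)*L^2*μ^2*Dq q + α^2*σ^2) m :=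
    ((hAint.const_mul _).add (hDint.const_mul _)).add (integrable_const _)
  have hmono : ∫ q, (∫ ξ, ‖T (q,ξ)‖^2 ∂D) ∂m
      ≤ ∫ q, ((1-α)*Aq q + (1/α)*L^2*μ^2*Dq q + α^2*σ^2) ∂m :=
    integral_mono_ae hTint.integral_prod_left hRHSint hbound
  have hsplit : ∫ q, ((1-α)*Aq q + (1/α)*L^2*μ^2*Dq q + α^2*σ^2) ∂m
      = (1-α) * (∫ q, Aq q ∂m) + (1/α)*L^2*μ^2 * (∫ q, Dq q ∂m) + α^2*σ^2 := by
    have hi1 : Integrable (fun q => (1-α)*Aq q + (1/α)*L^2*μ^2*Dq q) m := by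
      exact (hAint.const_mul _).add (hDint.const_mul _)
    have hi2 : Integrable (fun q => (1-α)*Aq q) m := by exact hAint.const_mul _
    have hi3 : Integrable (fun q => (1/α)*L^2*μ^2*Dq q) m := by exact hDint.const_mul _
    rw [integral_add hi1 (integrable_const _), integral_add hi2 hi3,
      integral_const_mul, integral_const_mul, integral_const, probReal_univ,
      one_smul]
  have hAeq : ∫ q, Aq q ∂m = ∫ ω, ‖gf (xt ω) - gt ω‖^2 ∂P := by
    rw [hm, integral_map hXm.aemeasurable hAqm.aestronglyMeasurable]
  have hDeq : ∫ q, Dq q ∂m = ∫ ω, ‖xtil ω - xt ω‖^2 ∂P := by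
    rw [hm, integral_map hXm.aemeasurable hDqm.aestronglyMeasurable]
  have hfub : ∫ p, ‖T p‖^2 ∂ν = ∫ q, (∫ ξ, ‖T (q,ξ)‖^2 ∂D) ∂m :=
    integral_prod _ hTint
  rw [hLHS, hfub]
  calc ∫ q, (∫ ξ, ‖T (q,ξ)‖^2 ∂D) ∂m
      ≤ ∫ q, ((1-α)*Aq q + (1/α)*L^2*μ^2*Dq q + α^2*σ^2) ∂m := hmono
    _ = (1-α) * (∫ q, Aq q ∂m) + (1/α)*L^2*μ^2 * (∫ q, Dq q ∂m) + α^2*σ^2 := hsplit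
    _ = (1 - α) * (∫ ω, ‖gf (xt ω) - gt ω‖ ^ 2 ∂P)
        + (1 / α) * L ^ 2 * μ ^ 2 * (∫ ω, ‖xtil ω - xt ω‖ ^ 2 ∂P) + α ^ 2 * σ ^ 2 := by
      rw [hAeq, hDeq]
end

section
/- Under the hypotheses: f(x) = E_{ξ∼D}[f(x;ξ)] with each f(·;ξ) differentiable and L-smooth, unbiased stochastic gradients with variance ≤ σ², constants k > 0, m ≥ max(3/2, k³), ρ > 0, γ > 0, c ≥ 1/k³ + 10 L² γ²/ρ², μ_t = k/(m+t)^{1/3}, α_{t+1} = c μ_t² with 0 < α_{t+1} ≤ 1; random vectors x_t, x̃_{t+1}, g_t with x_{t+1} = x_t + μ_t (x̃_{t+1} − x_t), ξ_{t+1} ∼ D independent of (x_t, x̃_{t+1}, g_t), and g_{t+1} = ∇f(x_{t+1}; ξ_{t+1}) + (1 − α_{t+1}) (g_t − ∇f(x_t; ξ_{t+1})): for every t ≥ 1, (1/μ_t) E‖∇f(x_{t+1}) − g_{t+1}‖² − (1/μ_{t−1}) E‖∇f(x_t) − g_t‖² ≤ −(10 L² γ²/ρ²) μ_t E‖∇f(x_t)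 − g_t‖² + 2 L² μ_t E‖x̃_{t+1} − x_t‖² + 2 c² μ_t³ σ². -/
set_option maxHeartbeats 1000000


open scoped RealInnerProductSpace
open MeasureTheory ProbabilityTheory

lemma cube_diff_le {u v : ℝ} (hv : 0 < v) (huv : v ≤ u) (h : u^3 - v^3 ≤ 1) :
    u - v ≤ 1/(u*v) := by
  have hu : 0 < u := lt_of_lt_of_le hv huv
  rw [le_div_iff₀ (by positivity)]
  nlinarith [mul_nonneg (sub_nonneg.2 huv) (sq_nonneg u), mul_nonneg (sub_nonneg.2 huv) (sq_nonneg v)]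

lemma gf_lip {d : ℕ} {Ξ : Type*} [MeasurableSpace Ξ] (D : Measure Ξ) [IsProbabilityMeasure D]
    (gS : Ξ → EuclideanSpace ℝ (Fin d) → EuclideanSpace ℝ (Fin d))
    (gf : EuclideanSpace ℝ (Fin d) → EuclideanSpace ℝ (Fin d)) (L : ℝ) (hL : 0 ≤ L)
    (hsmooth : ∀ ξ (x y : EuclideanSpace ℝ (Fin d)), ‖gS ξ x - gS ξ y‖ ≤ L * ‖x - y‖)
    (hunbiased : ∀ x, ∫ ξ, gS ξ x ∂D = gf x)
    (hgSmeas : Measurable (Function.uncurry gS)) :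
    ∀ x y, ‖gf x - gf y‖ ≤ L * ‖x - y‖ := by
  intro x y
  have hmx : Measurable (fun ξ => gS ξ x) :=
    hgSmeas.comp (measurable_id.prodMk measurable_const)
  have hmy : Measurable (fun ξ => gS ξ y) :=
    hgSmeas.comp (measurable_id.prodMk measurable_const)
  have hdiff : Integrable (fun ξ => gS ξ x - gS ξ y) D := by
    refine Integrable.mono' (integrable_const (L * ‖x - y‖))
      ((hmx.sub hmy).aestronglyMeasurable) ?_
    exact Filter.Eventually.of_forall fun ξ => hsmooth ξ x y
  by_cases h : Integrable (fun ξ => gS ξ x) D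
  · have hy : Integrable (fun ξ => gS ξ y) D := by
      exact (h.sub hdiff).congr (Filter.Eventually.of_forall fun ξ => by simp)
    rw [← hunbiased x, ← hunbiased y, ← integral_sub h hy]
    calc ‖∫ ξ, (gS ξ x - gS ξ y) ∂D‖ ≤ ∫ ξ, ‖gS ξ x - gS ξ y‖ ∂D :=
          norm_integral_le_integral_norm _
      _ ≤ ∫ _, L * ‖x - y‖ ∂D := by
          refine integral_mono hdiff.norm (integrable_const _) fun ξ => hsmooth ξ x y
      _ = L * ‖x - y‖ := by simp
  · have hy : ¬ Integrable (fun ξ => gS ξ y) D := by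
      intro hy
      exact h ((hy.add hdiff).congr (Filter.Eventually.of_forall fun ξ => by simp))
    rw [← hunbiased x, ← hunbiased y, integral_undef h, integral_undef hy]
    simp [mul_nonneg hL (norm_nonneg _)]

lemma slice_lemma {d : ℕ} {Ξ : Type*} [MeasurableSpace Ξ] (D : Measure Ξ) [IsProbabilityMeasure D]
    (gS : Ξ → EuclideanSpace ℝ (Fin d) → EuclideanSpace ℝ (Fin d))
    (gf : EuclideanSpace ℝ (Fin d) → EuclideanSpace ℝ (Fin d)) (L σ : ℝ) (hL : 0 ≤ L)
    (hsmooth : ∀ ξ (x y : EuclideanSpace ℝ (Fin d)), ‖gS ξ x - gS ξ y‖ ≤ L * ‖x - y‖)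
    (hunbiased : ∀ x, ∫ ξ, gS ξ x ∂D = gf x)
    (hvar : ∀ x, ∫ ξ, ‖gS ξ x - gf x‖ ^ 2 ∂D ≤ σ ^ 2)
    (hgSmeas : Measurable (Function.uncurry gS))
    (hlip : ∀ x y, ‖gf x - gf y‖ ≤ L * ‖x - y‖)
    (p q : EuclideanSpace ℝ (Fin d)) (a : ℝ) (ha0 : 0 < a) (ha1 : a ≤ 1)
    (hBint : Integrable (fun ξ => ‖(gf q - gS ξ q) + (1-a) • (gS ξ p - gf p)‖^2) D) :
    (Integrable (fun ξ => (gf q - gS ξ q) + (1-a) • (gS ξ p - gf p)) D) ∧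
    (∫ ξ, ((gf q - gS ξ q) + (1-a) • (gS ξ p - gf p)) ∂D = 0) ∧
    (∫ ξ, ‖(gf q - gS ξ q) + (1-a) • (gS ξ p - gf p)‖^2 ∂D
      ≤ 2*(1-a)^2*L^2*‖q-p‖^2 + 2*a^2*σ^2) := by
  set η1 : Ξ → EuclideanSpace ℝ (Fin d) := fun ξ => gS ξ q - gf q with hη1def
  set ηx : Ξ → EuclideanSpace ℝ (Fin d) := fun ξ => gS ξ p - gf p with hηxdef
  set B : Ξ → EuclideanSpace ℝ (Fin d) := fun ξ => (gf q - gS ξ q) + (1-a) • (gS ξ p - gf p)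
    with hBdef
  have hmq : Measurable (fun ξ => gS ξ q) :=
    hgSmeas.comp (measurable_id.prodMk measurable_const)
  have hmp : Measurable (fun ξ => gS ξ p) :=
    hgSmeas.comp (measurable_id.prodMk measurable_const)
  have hmη1 : Measurable η1 := hmq.sub measurable_const
  have hmηx : Measurable ηx := hmp.sub measurable_const
  have hBeq : ∀ ξ, B ξ = -(η1 ξ) + (1-a) • (ηx ξ) := by
    intro ξ; simp only [hBdef, hη1def, hηxdef]; abel
  have hYb : ∀ ξ, ‖ηx ξ - η1 ξ‖ ≤ 2 * L * ‖p - q‖ := by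
    intro ξ
    have : ηx ξ - η1 ξ = (gS ξ p - gS ξ q) - (gf p - gf q) := by
      simp only [hη1def, hηxdef]; abel
    rw [this]
    calc ‖(gS ξ p - gS ξ q) - (gf p - gf q)‖ ≤ ‖gS ξ p - gS ξ q‖ + ‖gf p - gf q‖ :=
          norm_sub_le _ _
      _ ≤ L * ‖p - q‖ + L * ‖p - q‖ := add_le_add (hsmooth ξ p q) (hlip p q)
      _ = 2 * L * ‖p - q‖ := by ring
  have haη1 : ∀ ξ, a • η1 ξ = (1-a) • (ηx ξ - η1 ξ) - B ξ := by
    intro ξ; rw [hBeq ξ]; module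
  have hη1b : ∀ ξ, ‖η1 ξ‖ * a ≤ 2 * L * ‖p - q‖ + ‖B ξ‖ := by
    intro ξ
    calc ‖η1 ξ‖ * a = ‖a • η1 ξ‖ := by
          rw [norm_smul, Real.norm_eq_abs, abs_of_pos ha0]; ring
      _ ≤ (1-a) * ‖ηx ξ - η1 ξ‖ + ‖B ξ‖ := by
          rw [haη1 ξ]
          refine (norm_sub_le _ _).trans ?_
          rw [norm_smul, Real.norm_eq_abs, abs_of_nonneg (by linarith)]
      _ ≤ 2 * L * ‖p - q‖ + ‖B ξ‖ := by
          have h1 := hYb ξ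
          have h2 : (1-a) * ‖ηx ξ - η1 ξ‖ ≤ 1 * (2 * L * ‖p - q‖) := by
            apply mul_le_mul (by linarith) h1 (norm_nonneg _) one_pos.le
          linarith
  have hη1ptw : ∀ ξ, ‖η1 ξ‖^2 ≤ 2/a^2 * (2 * L * ‖p - q‖)^2 + 2/a^2 * ‖B ξ‖^2 := by
    intro ξ
    have hb := hη1b ξ
    have hsq := mul_le_mul hb hb (by positivity) (by positivity)
    have ha2 : (0:ℝ) < a^2 := by positivity
    rw [div_mul_eq_mul_div, div_mul_eq_mul_div, ← add_div, le_div_iff₀ ha2]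
    nlinarith [sq_nonneg (2 * L * ‖p - q‖ - ‖B ξ‖)]
  have hη1sq : Integrable (fun ξ => ‖η1 ξ‖^2) D := by
    refine Integrable.mono'
      ((integrable_const (2 / a^2 * (2 * L * ‖p - q‖)^2)).add (hBint.const_mul (2 / a^2)))
      ((hmη1.norm.pow_const 2).aestronglyMeasurable) ?_
    refine Filter.Eventually.of_forall fun ξ => ?_
    simp only [Pi.add_apply]
    rw [Real.norm_eq_abs, abs_of_nonneg (sq_nonneg _)]
    exact hη1ptw ξ
  have hη1int : Integrable η1 D := by
    refine Integrable.mono' ((integrable_const 1).add hη1sq)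
      hmη1.aestronglyMeasurable ?_
    refine Filter.Eventually.of_forall fun ξ => ?_
    simp only [Pi.add_apply]
    nlinarith [sq_nonneg (‖η1 ξ‖ - 1), norm_nonneg (η1 ξ)]
  have hgSqint : Integrable (fun ξ => gS ξ q) D :=
    (hη1int.add (integrable_const (gf q))).congr
      (Filter.Eventually.of_forall fun ξ => by simp [hη1def])
  have hdiffint : Integrable (fun ξ => gS ξ p - gS ξ q) D := by
    refine Integrable.mono' (integrable_const (L * ‖p - q‖))
      ((hmp.sub hmq).aestronglyMeasurable) ?_
    exact Filter.Eventually.of_forall fun ξ => hsmooth ξ p q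
  have hgSpint : Integrable (fun ξ => gS ξ p) D :=
    (hgSqint.add hdiffint).congr (Filter.Eventually.of_forall fun ξ => by simp)
  have hηxint : Integrable ηx D := hgSpint.sub (integrable_const _)
  have iη1 : ∫ ξ, η1 ξ ∂D = 0 := by
    rw [hη1def, integral_sub hgSqint (integrable_const _), hunbiased, integral_const]
    simp
  have iηx : ∫ ξ, ηx ξ ∂D = 0 := by
    rw [hηxdef, integral_sub hgSpint (integrable_const _), hunbiased, integral_const]
    simp
  refine ⟨?_, ?_, ?_⟩
  · exact (hη1int.neg.add (hηxint.smul (1-a))).congr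
      (Filter.Eventually.of_forall fun ξ => (hBeq ξ).symm)
  · have heq : ∫ ξ, B ξ ∂D = ∫ ξ, (-(η1 ξ) + (1-a) • (ηx ξ)) ∂D :=
      integral_congr_ae (Filter.Eventually.of_forall hBeq)
    have h1 : ∫ ξ, (-(η1 ξ) + (1-a) • (ηx ξ)) ∂D
        = ∫ ξ, -(η1 ξ) ∂D + ∫ ξ, (1-a) • (ηx ξ) ∂D :=
      integral_add hη1int.neg (hηxint.smul (1-a))
    rw [heq, h1, integral_neg, integral_smul, iη1, iηx]
    simp
  · have hDint : Integrable (fun ξ => ‖ηx ξ - η1 ξ‖^2) D := by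
      refine Integrable.mono' (integrable_const ((2 * L * ‖p - q‖)^2))
        (((hmηx.sub hmη1).norm.pow_const 2).aestronglyMeasurable) ?_
      refine Filter.Eventually.of_forall fun ξ => ?_
      rw [Real.norm_eq_abs, abs_of_nonneg (sq_nonneg _)]
      exact sq_le_sq' (by nlinarith [hYb ξ, norm_nonneg (ηx ξ - η1 ξ)]) (hYb ξ)
    have hvq : ∫ ξ, ‖η1 ξ‖^2 ∂D ≤ σ^2 := hvar q
    have hvarY : ∫ ξ, ‖ηx ξ - η1 ξ‖^2 ∂D ≤ L^2 * ‖p - q‖^2 := by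
      set Y : Ξ → EuclideanSpace ℝ (Fin d) := fun ξ => gS ξ p - gS ξ q with hYdef
      set mY : EuclideanSpace ℝ (Fin d) := gf p - gf q with hmYdef
      have hYint : Integrable Y D := hdiffint
      have hiY : ∫ ξ, Y ξ ∂D = mY := by
        rw [hYdef, integral_sub hgSpint hgSqint, hunbiased, hunbiased]
      have hYe : ∀ ξ, ηx ξ - η1 ξ = Y ξ - mY := by
        intro ξ; simp only [hη1def, hηxdef, hYdef, hmYdef]; abel
      have hnY2int : Integrable (fun ξ => ‖Y ξ‖^2) D := by
        refine Integrable.mono' (integrable_const ((L * ‖p - q‖)^2))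
          (((hmp.sub hmq).norm.pow_const 2).aestronglyMeasurable) ?_
        refine Filter.Eventually.of_forall fun ξ => ?_
        rw [Real.norm_eq_abs, abs_of_nonneg (sq_nonneg _)]
        exact sq_le_sq' (by nlinarith [hsmooth ξ p q, norm_nonneg (Y ξ)]) (hsmooth ξ p q)
      have hminner : Measurable (fun ξ => (⟪mY, Y ξ⟫ : ℝ)) :=
        Measurable.inner measurable_const (hmp.sub hmq)
      have hinner : Integrable (fun ξ => (⟪mY, Y ξ⟫ : ℝ)) D := by
        refine Integrable.mono' (integrable_const (‖mY‖ * (L * ‖p - q‖)))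
          hminner.aestronglyMeasurable ?_
        refine Filter.Eventually.of_forall fun ξ => ?_
        rw [Real.norm_eq_abs]
        calc |(⟪mY, Y ξ⟫ : ℝ)| ≤ ‖mY‖ * ‖Y ξ‖ := abs_real_inner_le_norm _ _
          _ ≤ ‖mY‖ * (L * ‖p - q‖) :=
            mul_le_mul_of_nonneg_left (hsmooth ξ p q) (norm_nonneg _)
      have hexp : ∀ ξ, ‖ηx ξ - η1 ξ‖^2 = ‖Y ξ‖^2 - 2*⟪mY, Y ξ⟫ + ‖mY‖^2 := by
        intro ξ
        rw [hYe ξ, norm_sub_sq_real, real_inner_comm]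
      have hintinner : ∫ ξ, (⟪mY, Y ξ⟫ : ℝ) ∂D = ‖mY‖^2 := by
        rw [integral_inner hYint, hiY, real_inner_self_eq_norm_sq]
      calc ∫ ξ, ‖ηx ξ - η1 ξ‖^2 ∂D
          = ∫ ξ, (‖Y ξ‖^2 - 2*⟪mY, Y ξ⟫ + ‖mY‖^2) ∂D :=
            integral_congr_ae (Filter.Eventually.of_forall fun ξ => hexp ξ)
        _ = ∫ ξ, ‖Y ξ‖^2 ∂D - 2 * ∫ ξ, (⟪mY, Y ξ⟫:ℝ) ∂D + ‖mY‖^2 := by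
            have h1 : ∫ ξ, ((‖Y ξ‖^2 - 2*(⟪mY, Y ξ⟫:ℝ)) + ‖mY‖^2) ∂D
                = ∫ ξ, (‖Y ξ‖^2 - 2*(⟪mY, Y ξ⟫:ℝ)) ∂D + ∫ _ξ, ‖mY‖^2 ∂D :=
              integral_add (hnY2int.sub (hinner.const_mul 2)) (integrable_const _)
            have h2 : ∫ ξ, (‖Y ξ‖^2 - 2*(⟪mY, Y ξ⟫:ℝ)) ∂D
                = ∫ ξ, ‖Y ξ‖^2 ∂D - ∫ ξ, 2*(⟪mY, Y ξ⟫:ℝ) ∂D :=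
              integral_sub hnY2int (hinner.const_mul 2)
            have h3 : ∫ ξ, 2*(⟪mY, Y ξ⟫:ℝ) ∂D = 2 * ∫ ξ, (⟪mY, Y ξ⟫:ℝ) ∂D :=
              integral_const_mul _ _
            rw [h1, h2, h3, integral_const]
            simp
        _ = ∫ ξ, ‖Y ξ‖^2 ∂D - ‖mY‖^2 := by rw [hintinner]; ring
        _ ≤ ∫ ξ, ‖Y ξ‖^2 ∂D := by linarith [sq_nonneg ‖mY‖]
        _ ≤ (L * ‖p - q‖)^2 := by
            have := integral_mono hnY2int (integrable_const ((L * ‖p - q‖)^2))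
              (fun ξ => by
                exact sq_le_sq' (by nlinarith [hsmooth ξ p q, norm_nonneg (Y ξ)])
                  (hsmooth ξ p q))
            simpa using this
        _ = L^2 * ‖p - q‖^2 := by ring
    have hBptw : ∀ ξ, ‖B ξ‖^2 ≤ 2*(1-a)^2*‖ηx ξ - η1 ξ‖^2 + 2*a^2*‖η1 ξ‖^2 := by
      intro ξ
      have hBe2 : B ξ = (1-a) • (ηx ξ - η1 ξ) - a • η1 ξ := by rw [hBeq ξ]; module
      have h1 : ‖B ξ‖ ≤ (1-a) * ‖ηx ξ - η1 ξ‖ + a * ‖η1 ξ‖ := by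
        rw [hBe2]
        refine (norm_sub_le _ _).trans ?_
        rw [norm_smul, norm_smul, Real.norm_eq_abs, Real.norm_eq_abs,
          abs_of_nonneg (by linarith), abs_of_pos ha0]
      nlinarith [sq_nonneg ((1-a)*‖ηx ξ - η1 ξ‖ - a*‖η1 ξ‖), norm_nonneg (B ξ),
        mul_nonneg (mul_nonneg (by linarith : (0:ℝ) ≤ 1-a) (norm_nonneg (ηx ξ - η1 ξ)))
          (mul_nonneg ha0.le (norm_nonneg (η1 ξ)))]
    calc ∫ ξ, ‖B ξ‖^2 ∂D
        ≤ ∫ ξ, (2*(1-a)^2*‖ηx ξ - η1 ξ‖^2 + 2*a^2*‖η1 ξ‖^2) ∂D :=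
          integral_mono hBint ((hDint.const_mul _).add (hη1sq.const_mul _)) hBptw
      _ = 2*(1-a)^2 * ∫ ξ, ‖ηx ξ - η1 ξ‖^2 ∂D + 2*a^2 * ∫ ξ, ‖η1 ξ‖^2 ∂D := by
          rw [integral_add (hDint.const_mul _) (hη1sq.const_mul _),
            integral_const_mul, integral_const_mul]
      _ ≤ 2*(1-a)^2 * (L^2 * ‖p - q‖^2) + 2*a^2 * σ^2 :=
          add_le_add (mul_le_mul_of_nonneg_left hvarY (by positivity))
            (mul_le_mul_of_nonneg_left hvq (by positivity))
      _ = 2*(1-a)^2*L^2*‖q-p‖^2 + 2*a^2*σ^2 := by rw [norm_sub_rev]; ring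

lemma scalar_key (k c K u v : ℝ) (hk : 0 < k) (hv : 0 < v) (huv : v ≤ u)
    (hkv : k ≤ v) (h1 : u - v ≤ 1/(u*v)) (hK : 0 ≤ K) (hc : 1/k^3 + K ≤ c)
    (a : ℝ) (ha : a = c * (k/u)^2) (ha0 : 0 < a) (ha1 : a ≤ 1) :
    (1-a)^2 * (1/(k/u)) ≤ 1/(k/v) - K * (k/u) := by
  have hu : 0 < u := lt_of_lt_of_le hv huv
  have h2 : (1-a)^2 ≤ 1 - a := by nlinarith
  have h3 : (0:ℝ) ≤ u/k := by positivity
  rw [one_div_div, one_div_div]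
  calc (1-a)^2 * (u/k) ≤ (1-a)*(u/k) := mul_le_mul_of_nonneg_right h2 h3
    _ = u/k - c*(k/u) := by rw [ha]; field_simp
    _ ≤ v/k - K*(k/u) := by
        have e1 : u - v ≤ 1/(u*k) := by
          refine h1.trans ?_
          apply one_div_le_one_div_of_le (by positivity)
          nlinarith
        have e2 : 1/k^3 ≤ c - K := by linarith
        have e25 : 1/(u*k) = (1/k^3) * (k^2/u) := by field_simp
        have e3 : u - v ≤ (c-K)*(k^2/u) := by
          rw [e25] at e1
          refine e1.trans (mul_le_mul_of_nonneg_right e2 (by positivity))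
        have e4 : (u - v)/k ≤ ((c-K)*(k^2/u))/k := by gcongr
        have e5 : ((c-K)*(k^2/u))/k = (c-K)*(k/u) := by field_simp
        have e6 : (u-v)/k = u/k - v/k := sub_div u v k
        rw [e5, e6] at e4
        linarith

/-- one-step Lyapunov inequality for the STORM estimator in SUPER-ADAM,
`τ = 1`: with `f(x) = E_ξ[f(x;ξ)]`, each `f(·;ξ)` differentiable and `L`-smooth,
unbiased stochastic gradients with variance `≤ σ²`, `k > 0`, `m ≥ max(3/2, k³)`,
`ρ, γ > 0`, `c ≥ 1/k³ + 10L²γ²/ρ²`, `μ_t = k/(m+t)^{1/3}`, `α_{t+1} = c μ_t² ∈ (0,1]`,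
`x_{t+1} = x_t + μ_t(x̃_{t+1} − x_t)`, `ξ_{t+1} ∼ D` independent of `(x_t, x̃_{t+1}, g_t)`,
`g_{t+1} = ∇f(x_{t+1};ξ_{t+1}) + (1 − α_{t+1})(g_t − ∇f(x_t;ξ_{t+1}))`: for every `t ≥ 1`,
`(1/μ_t) E‖∇f(x_{t+1}) − g_{t+1}‖² − (1/μ_{t−1}) E‖∇f(x_t) − g_t‖²
  ≤ −(10L²γ²/ρ²) μ_t E‖∇f(x_t) − g_t‖² + 2L² μ_t E‖x̃_{t+1} − x_t‖² + 2c² μ_t³ σ²`. -/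
theorem statement7 {d : ℕ} {Ω : Type*} [MeasurableSpace Ω] (P : Measure Ω)
    [IsProbabilityMeasure P] {Ξ : Type*} [MeasurableSpace Ξ] (D : Measure Ξ)
    [IsProbabilityMeasure D]
    (fS : Ξ → EuclideanSpace ℝ (Fin d) → ℝ)
    (gS : Ξ → EuclideanSpace ℝ (Fin d) → EuclideanSpace ℝ (Fin d))
    (f : EuclideanSpace ℝ (Fin d) → ℝ)
    (gf : EuclideanSpace ℝ (Fin d) → EuclideanSpace ℝ (Fin d))
    (L σ k m ρ γ c : ℝ) (hL : 0 < L) (hσ : 0 ≤ σ)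
    (hf : ∀ x, f x = ∫ ξ, fS ξ x ∂D)
    (hgS : ∀ ξ x, HasGradientAt (fS ξ) (gS ξ x) x)
    (hgf : ∀ x, HasGradientAt f (gf x) x)
    (hsmooth : ∀ ξ (x y : EuclideanSpace ℝ (Fin d)), ‖gS ξ x - gS ξ y‖ ≤ L * ‖x - y‖)
    (hunbiased : ∀ x, ∫ ξ, gS ξ x ∂D = gf x)
    (hvar : ∀ x, ∫ ξ, ‖gS ξ x - gf x‖ ^ 2 ∂D ≤ σ ^ 2)
    (hgSmeas : Measurable (Function.uncurry gS))
    (hk : 0 < k) (hm : max (3 / 2) (k ^ 3) ≤ m) (hρ : 0 < ρ) (hγ : 0 < γ)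
    (hc : 1 / k ^ 3 + 10 * L ^ 2 * γ ^ 2 / ρ ^ 2 ≤ c)
    (μ : ℕ → ℝ) (hμ : ∀ t : ℕ, μ t = k / (m + t) ^ ((1 : ℝ) / 3))
    (α : ℕ → ℝ) (hα : ∀ t : ℕ, α (t + 1) = c * μ t ^ 2)
    (hα01 : ∀ t : ℕ, 0 < α (t + 1) ∧ α (t + 1) ≤ 1) :
    ∀ t : ℕ, 1 ≤ t →
    ∀ (xt xtil gt : Ω → EuclideanSpace ℝ (Fin d)) (ξ1 : Ω → Ξ)
      (xt1 gt1 : Ω → EuclideanSpace ℝ (Fin d)),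
      Measurable xt → Measurable xtil → Measurable gt → Measurable ξ1 →
      (∀ ω, xt1 ω = xt ω + μ t • (xtil ω - xt ω)) →
      Measure.map ξ1 P = D →
      IndepFun (fun ω => (xt ω, xtil ω, gt ω)) ξ1 P →
      (∀ ω, gt1 ω = gS (ξ1 ω) (xt1 ω) + (1 - α (t + 1)) • (gt ω - gS (ξ1 ω) (xt ω))) →
      Integrable (fun ω => ‖gf (xt ω) - gt ω‖ ^ 2) P →
      Integrable (fun ω => ‖gf (xt1 ω) - gt1 ω‖ ^ 2) P →
      Integrable (fun ω => ‖xtil ω - xt ω‖ ^ 2) P →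
      (1 / μ t) * ∫ ω, ‖gf (xt1 ω) - gt1 ω‖ ^ 2 ∂P
          - (1 / μ (t - 1)) * ∫ ω, ‖gf (xt ω) - gt ω‖ ^ 2 ∂P
        ≤ -(10 * L ^ 2 * γ ^ 2 / ρ ^ 2) * μ t * ∫ ω, ‖gf (xt ω) - gt ω‖ ^ 2 ∂P
          + 2 * L ^ 2 * μ t * ∫ ω, ‖xtil ω - xt ω‖ ^ 2 ∂P
          + 2 * c ^ 2 * μ t ^ 3 * σ ^ 2 := by
  intro t ht xt xtil gt ξ1 xt1 gt1 hmxt hmxtil hmgt hmξ hx1def hmap hindep hg1def hI0 hI1 hIX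
  have hm32 : (3:ℝ)/2 ≤ m := le_trans (le_max_left _ _) hm
  have hmk3 : k^3 ≤ m := le_trans (le_max_right _ _) hm
  have hLip : ∀ x y, ‖gf x - gf y‖ ≤ L * ‖x - y‖ :=
    gf_lip D gS gf L hL.le hsmooth hunbiased hgSmeas
  have hgfcont : Continuous gf := by
    have hlw : LipschitzWith (Real.toNNReal L) gf := by
      refine LipschitzWith.of_dist_le_mul fun x y => ?_
      rw [dist_eq_norm, Real.coe_toNNReal']
      refine (hLip x y).trans (mul_le_mul_of_nonneg_right (le_max_left _ _) (norm_nonneg _))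
    exact hlw.continuous
  have hgfmeas : Measurable gf := hgfcont.measurable
  obtain ⟨ha0, ha1⟩ := hα01 t
  set a : ℝ := α (t+1) with hadef
  have hmtpos : (0:ℝ) < m + t := by
    have : (0:ℝ) ≤ (t:ℝ) := Nat.cast_nonneg t
    linarith
  have hμpos : 0 < μ t := by rw [hμ t]; positivity
  -- measure-theoretic setup
  set V : Ω → (EuclideanSpace ℝ (Fin d)) × (EuclideanSpace ℝ (Fin d)) × (EuclideanSpace ℝ (Fin d)) :=
    fun ω => (xt ω, xtil ω, gt ω) with hVdef
  have hmV : Measurable V := hmxt.prodMk (hmxtil.prodMk hmgt)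
  have hι : Measurable (fun ω => (V ω, ξ1 ω)) := hmV.prodMk hmξ
  set ν := Measure.map V P with hνdef
  haveI : IsProbabilityMeasure ν := Measure.isProbabilityMeasure_map hmV.aemeasurable
  have hprodmap : Measure.map (fun ω => (V ω, ξ1 ω)) P = ν.prod D := by
    rw [hνdef, ← hmap]
    exact (indepFun_iff_map_prod_eq_prod_map_map hmV.aemeasurable hmξ.aemeasurable).mp hindep
  set X1 := fun v : (EuclideanSpace ℝ (Fin d)) × (EuclideanSpace ℝ (Fin d)) × (EuclideanSpace ℝ (Fin d)) =>
    v.1 + μ t • (v.2.1 - v.1) with hX1def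
  set A := fun v : (EuclideanSpace ℝ (Fin d)) × (EuclideanSpace ℝ (Fin d)) × (EuclideanSpace ℝ (Fin d)) =>
    (1 - a) • (gf v.1 - v.2.2) with hAdef
  set Bf := fun w : ((EuclideanSpace ℝ (Fin d)) × (EuclideanSpace ℝ (Fin d)) × (EuclideanSpace ℝ (Fin d))) × Ξ =>
    (gf (X1 w.1) - gS w.2 (X1 w.1)) + (1 - a) • (gS w.2 w.1.1 - gf w.1.1) with hBfdef
  have hmX1 : Measurable X1 :=
    measurable_fst.add ((measurable_snd.fst.sub measurable_fst).const_smul (μ t))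
  have hmA : Measurable A :=
    ((hgfmeas.comp measurable_fst).sub measurable_snd.snd).const_smul (1 - a)
  have hmBf : Measurable Bf := by
    have h1 : Measurable (fun w : ((EuclideanSpace ℝ (Fin d)) × (EuclideanSpace ℝ (Fin d)) × (EuclideanSpace ℝ (Fin d))) × Ξ => gS w.2 (X1 w.1)) :=
      hgSmeas.comp (measurable_snd.prodMk (hmX1.comp measurable_fst))
    have h2 : Measurable (fun w : ((EuclideanSpace ℝ (Fin d)) × (EuclideanSpace ℝ (Fin d)) × (EuclideanSpace ℝ (Fin d))) × Ξ => gS w.2 w.1.1) :=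
      hgSmeas.comp (measurable_snd.prodMk measurable_fst.fst)
    exact ((hgfmeas.comp (hmX1.comp measurable_fst)).sub h1).add
      ((h2.sub (hgfmeas.comp measurable_fst.fst)).const_smul (1 - a))
  -- pointwise identity
  have hptw : ∀ ω, gf (xt1 ω) - gt1 ω = A (V ω) + Bf (V ω, ξ1 ω) := by
    intro ω
    rw [hg1def ω, hx1def ω]
    show _ = (1 - a) • (gf (xt ω) - gt ω) +
      ((gf (X1 (V ω)) - gS (ξ1 ω) (X1 (V ω))) + (1 - a) • (gS (ξ1 ω) (xt ω) - gf (xt ω)))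
    have hXV : X1 (V ω) = xt ω + μ t • (xtil ω - xt ω) := rfl
    rw [hXV]
    module
  -- transfers
  have hmapint : ∀ {F : ((EuclideanSpace ℝ (Fin d)) × (EuclideanSpace ℝ (Fin d)) × (EuclideanSpace ℝ (Fin d))) × Ξ → ℝ},
      Measurable F → (Integrable (fun ω => F (V ω, ξ1 ω)) P ↔ Integrable F (ν.prod D)) := by
    intro F hF
    rw [← hprodmap, integrable_map_measure hF.aestronglyMeasurable hι.aemeasurable]
    exact Iff.rfl
  have hmapeq : ∀ {F : ((EuclideanSpace ℝ (Fin d)) × (EuclideanSpace ℝ (Fin d)) × (EuclideanSpace ℝ (Fin d))) × Ξ → ℝ},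
      Measurable F → ∫ ω, F (V ω, ξ1 ω) ∂P = ∫ w, F w ∂(ν.prod D) := by
    intro F hF
    rw [← hprodmap, integral_map hι.aemeasurable hF.aestronglyMeasurable]
  have hνint : ∀ {G : (EuclideanSpace ℝ (Fin d)) × (EuclideanSpace ℝ (Fin d)) × (EuclideanSpace ℝ (Fin d)) → ℝ},
      Measurable G → (Integrable (fun ω => G (V ω)) P ↔ Integrable G ν) := by
    intro G hG
    rw [hνdef, integrable_map_measure hG.aestronglyMeasurable hmV.aemeasurable]
    exact Iff.rfl
  have hνeq : ∀ {G : (EuclideanSpace ℝ (Fin d)) × (EuclideanSpace ℝ (Fin d)) × (EuclideanSpace ℝ (Fin d)) → ℝ},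
      Measurable G → ∫ ω, G (V ω) ∂P = ∫ v, G v ∂ν := by
    intro G hG
    rw [hνdef, integral_map hmV.aemeasurable hG.aestronglyMeasurable]
  set G0 := fun v : (EuclideanSpace ℝ (Fin d)) × (EuclideanSpace ℝ (Fin d)) × (EuclideanSpace ℝ (Fin d)) =>
    ‖gf v.1 - v.2.2‖^2 with hG0def
  set GX := fun v : (EuclideanSpace ℝ (Fin d)) × (EuclideanSpace ℝ (Fin d)) × (EuclideanSpace ℝ (Fin d)) =>
    ‖v.2.1 - v.1‖^2 with hGXdef
  set F1 := fun w : ((EuclideanSpace ℝ (Fin d)) × (EuclideanSpace ℝ (Fin d)) × (EuclideanSpace ℝ (Fin d))) × Ξ =>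
    ‖A w.1 + Bf w‖^2 with hF1def
  have hmG0 : Measurable G0 := (((hgfmeas.comp measurable_fst).sub measurable_snd.snd).norm.pow_const 2)
  have hmGX : Measurable GX := ((measurable_snd.fst.sub measurable_fst).norm.pow_const 2)
  have hmF1 : Measurable F1 := (((hmA.comp measurable_fst).add hmBf).norm.pow_const 2)
  -- transfer of the three integrability hypotheses and integrals
  have hG0ν : Integrable G0 ν := (hνint hmG0).mp hI0
  have hGXν : Integrable GX ν := (hνint hmGX).mp hIX
  have hI0eq : ∫ ω, ‖gf (xt ω) - gt ω‖ ^ 2 ∂P = ∫ v, G0 v ∂ν := hνeq hmG0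
  have hIXeq : ∫ ω, ‖xtil ω - xt ω‖ ^ 2 ∂P = ∫ v, GX v ∂ν := hνeq hmGX
  have hI1f : (fun ω => ‖gf (xt1 ω) - gt1 ω‖ ^ 2) = fun ω => F1 (V ω, ξ1 ω) :=
    funext fun ω => by rw [hF1def]; simp only; rw [← hptw ω]
  have hF1int : Integrable F1 (ν.prod D) := (hmapint hmF1).mp (hI1f ▸ hI1)
  have hI1eq : ∫ ω, ‖gf (xt1 ω) - gt1 ω‖ ^ 2 ∂P = ∫ w, F1 w ∂(ν.prod D) := by
    rw [hI1f]; exact hmapeq hmF1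
  -- integrability on the product space
  have hfstmap : Measure.map Prod.fst (ν.prod D) = ν := by
    rw [Measure.map_fst_prod]; simp
  have compFst : ∀ {H : (EuclideanSpace ℝ (Fin d)) × (EuclideanSpace ℝ (Fin d)) × (EuclideanSpace ℝ (Fin d)) → ℝ},
      Measurable H → Integrable H ν →
      Integrable (fun w : ((EuclideanSpace ℝ (Fin d)) × (EuclideanSpace ℝ (Fin d)) × (EuclideanSpace ℝ (Fin d))) × Ξ => H w.1) (ν.prod D) := by
    intro H hmH hH
    rw [← hfstmap] at hH
    exact (integrable_map_measure hmH.aestronglyMeasurable measurable_fst.aemeasurable).mp hH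
  have hAnorm : ∀ v : (EuclideanSpace ℝ (Fin d)) × (EuclideanSpace ℝ (Fin d)) × (EuclideanSpace ℝ (Fin d)),
      ‖A v‖^2 = (1-a)^2 * G0 v := by
    intro v
    rw [hAdef, hG0def]
    simp only
    rw [norm_smul, Real.norm_eq_abs, abs_of_nonneg (by linarith : (0:ℝ) ≤ 1 - a), mul_pow]
  have hA2ν : Integrable (fun v => ‖A v‖^2) ν := by
    have : (fun v => ‖A v‖^2) = fun v => (1-a)^2 * G0 v := funext hAnorm
    rw [this]
    exact hG0ν.const_mul _
  have hA2int : Integrable (fun w : ((EuclideanSpace ℝ (Fin d)) × (EuclideanSpace ℝ (Fin d)) × (EuclideanSpace ℝ (Fin d))) × Ξ => ‖A w.1‖^2) (ν.prod D) :=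
    compFst (hmA.norm.pow_const 2) hA2ν
  have hB2int : Integrable (fun w => ‖Bf w‖^2) (ν.prod D) := by
    refine Integrable.mono' ((hF1int.const_mul 2).add (hA2int.const_mul 2))
      ((hmBf.norm.pow_const 2).aestronglyMeasurable) ?_
    refine Filter.Eventually.of_forall fun w => ?_
    simp only [Pi.add_apply]
    rw [Real.norm_eq_abs, abs_of_nonneg (sq_nonneg _)]
    have h1 : ‖Bf w‖ ≤ ‖A w.1 + Bf w‖ + ‖A w.1‖ := by
      have h := norm_sub_le (A w.1 + Bf w) (A w.1)
      rwa [add_sub_cancel_left] at h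
    have h2 : F1 w = ‖A w.1 + Bf w‖^2 := rfl
    nlinarith [sq_nonneg (‖A w.1 + Bf w‖ - ‖A w.1‖), norm_nonneg (Bf w),
      norm_nonneg (A w.1 + Bf w), norm_nonneg (A w.1)]
  have hmInner : Measurable (fun w : ((EuclideanSpace ℝ (Fin d)) × (EuclideanSpace ℝ (Fin d)) × (EuclideanSpace ℝ (Fin d))) × Ξ => (⟪A w.1, Bf w⟫ : ℝ)) :=
    Measurable.inner (hmA.comp measurable_fst) hmBf
  have hCrossInt : Integrable (fun w => (⟪A w.1, Bf w⟫ : ℝ)) (ν.prod D) := by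
    refine Integrable.mono' (hA2int.add hB2int) hmInner.aestronglyMeasurable ?_
    refine Filter.Eventually.of_forall fun w => ?_
    simp only [Pi.add_apply]
    rw [Real.norm_eq_abs]
    have hab : |(⟪A w.1, Bf w⟫ : ℝ)| ≤ ‖A w.1‖ * ‖Bf w‖ := abs_real_inner_le_norm _ _
    have hab2 : ‖A w.1‖ * ‖Bf w‖ ≤ ‖A w.1‖^2 + ‖Bf w‖^2 := by
      nlinarith [sq_nonneg (‖A w.1‖ - ‖Bf w‖), norm_nonneg (A w.1), norm_nonneg (Bf w)]
    exact hab.trans hab2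
  -- slice facts hold a.e.
  have hslice : ∀ᵐ v ∂ν, Integrable (fun ξ => Bf (v, ξ)) D ∧
      (∫ ξ, Bf (v, ξ) ∂D = 0) ∧
      (∫ ξ, ‖Bf (v, ξ)‖^2 ∂D ≤ 2*(1-a)^2*L^2*‖X1 v - v.1‖^2 + 2*a^2*σ^2) := by
    filter_upwards [hB2int.prod_right_ae] with v hv
    exact slice_lemma D gS gf L σ hL.le hsmooth hunbiased hvar hgSmeas hLip
      v.1 (X1 v) a ha0 ha1 hv
  -- cross term zero
  have hCross0 : ∫ w, (⟪A w.1, Bf w⟫ : ℝ) ∂(ν.prod D) = 0 := by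
    rw [integral_prod _ hCrossInt]
    have hz : (fun v => ∫ ξ, (⟪A v, Bf (v, ξ)⟫ : ℝ) ∂D) =ᵐ[ν] fun _ => (0:ℝ) := by
      filter_upwards [hslice] with v hv
      obtain ⟨hBi, hz0, -⟩ := hv
      rw [integral_inner hBi, hz0, inner_zero_right]
    rw [integral_congr_ae hz, integral_zero]
  -- second moment of B
  have hB2bound : ∫ w, ‖Bf w‖^2 ∂(ν.prod D)
      ≤ 2*(1-a)^2*L^2*(μ t)^2 * ∫ v, GX v ∂ν + 2*a^2*σ^2 := by
    rw [integral_prod _ hB2int]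
    have hbnd : ∀ᵐ v ∂ν, (∫ ξ, ‖Bf (v, ξ)‖^2 ∂D)
        ≤ 2*(1-a)^2*L^2*(μ t)^2 * GX v + 2*a^2*σ^2 := by
      filter_upwards [hslice] with v hv
      obtain ⟨-, -, hub⟩ := hv
      refine hub.trans ?_
      have hXv : X1 v - v.1 = μ t • (v.2.1 - v.1) := by
        rw [hX1def]; simp only; rw [add_sub_cancel_left]
      have hXn : ‖X1 v - v.1‖^2 = (μ t)^2 * GX v := by
        rw [hXv, norm_smul, Real.norm_eq_abs, abs_of_pos hμpos, mul_pow, hGXdef]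
      rw [hXn]
      apply le_of_eq; ring
    calc ∫ v, (∫ ξ, ‖Bf (v, ξ)‖^2 ∂D) ∂ν
        ≤ ∫ v, (2*(1-a)^2*L^2*(μ t)^2 * GX v + 2*a^2*σ^2) ∂ν :=
          integral_mono_ae hB2int.integral_prod_left
            ((hGXν.const_mul _).add (integrable_const _)) hbnd
      _ = 2*(1-a)^2*L^2*(μ t)^2 * ∫ v, GX v ∂ν + 2*a^2*σ^2 := by
          rw [integral_add (hGXν.const_mul _) (integrable_const _), integral_const_mul,
            integral_const]
          simp
  -- expansion
  have hexp : ∫ w, F1 w ∂(ν.prod D) = ∫ w, ‖A w.1‖^2 ∂(ν.prod D)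
      + 2 * ∫ w, (⟪A w.1, Bf w⟫ : ℝ) ∂(ν.prod D) + ∫ w, ‖Bf w‖^2 ∂(ν.prod D) := by
    have hpt : ∀ w, F1 w = ‖A w.1‖^2 + 2*(⟪A w.1, Bf w⟫:ℝ) + ‖Bf w‖^2 := fun w => by
      rw [hF1def]; exact norm_add_sq_real _ _
    have h1 : ∫ w, F1 w ∂(ν.prod D)
        = ∫ w, (‖A w.1‖^2 + 2*(⟪A w.1, Bf w⟫:ℝ) + ‖Bf w‖^2) ∂(ν.prod D) :=
      integral_congr_ae (Filter.Eventually.of_forall hpt)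
    have h2 : ∫ w, ((‖A w.1‖^2 + 2*(⟪A w.1, Bf w⟫:ℝ)) + ‖Bf w‖^2) ∂(ν.prod D)
        = ∫ w, (‖A w.1‖^2 + 2*(⟪A w.1, Bf w⟫:ℝ)) ∂(ν.prod D) + ∫ w, ‖Bf w‖^2 ∂(ν.prod D) :=
      integral_add (hA2int.add (hCrossInt.const_mul 2)) hB2int
    have h3 : ∫ w, (‖A w.1‖^2 + 2*(⟪A w.1, Bf w⟫:ℝ)) ∂(ν.prod D)
        = ∫ w, ‖A w.1‖^2 ∂(ν.prod D) + ∫ w, 2*(⟪A w.1, Bf w⟫:ℝ) ∂(ν.prod D) :=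
      integral_add hA2int (hCrossInt.const_mul 2)
    have h4 : ∫ w, 2*(⟪A w.1, Bf w⟫:ℝ) ∂(ν.prod D)
        = 2 * ∫ w, (⟪A w.1, Bf w⟫:ℝ) ∂(ν.prod D) := integral_const_mul _ _
    rw [h1, h2, h3, h4]
  have hA2prod : ∫ w, ‖A w.1‖^2 ∂(ν.prod D) = (1-a)^2 * ∫ v, G0 v ∂ν := by
    have h0 : ∫ w : ((EuclideanSpace ℝ (Fin d)) × (EuclideanSpace ℝ (Fin d)) × (EuclideanSpace ℝ (Fin d))) × Ξ, ‖A w.1‖^2 ∂(ν.prod D)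
        = ∫ v, ‖A v‖^2 ∂ν := by
      conv_rhs => rw [← hfstmap]
      rw [integral_map measurable_fst.aemeasurable
        (hmA.norm.pow_const 2).aestronglyMeasurable]
    rw [h0, show (fun v => ‖A v‖^2) = fun v => (1-a)^2 * G0 v from funext hAnorm,
      integral_const_mul]
  have key : ∫ w, F1 w ∂(ν.prod D) ≤ (1-a)^2 * ∫ v, G0 v ∂ν
      + 2*(1-a)^2*L^2*(μ t)^2 * ∫ v, GX v ∂ν + 2*a^2*σ^2 := by
    rw [hexp, hA2prod, hCross0]
    linarith only [hB2bound]
  -- nonnegativity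
  have hI0n : 0 ≤ ∫ v, G0 v ∂ν := integral_nonneg fun v => sq_nonneg _
  have hIXn : 0 ≤ ∫ v, GX v ∂ν := integral_nonneg fun v => sq_nonneg _
  -- scalar part
  have hKnn : (0:ℝ) ≤ 10*L^2*γ^2/ρ^2 := by positivity
  set u := (m + (t:ℝ)) ^ ((1:ℝ)/3) with hudef
  set w := (m + ((t:ℝ) - 1)) ^ ((1:ℝ)/3) with hwdef
  have htR : (1:ℝ) ≤ (t:ℝ) := by exact_mod_cast ht
  have hb0 : (0:ℝ) < m + ((t:ℝ)-1) := by linarith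
  have hwpos : 0 < w := Real.rpow_pos_of_pos hb0 _
  have huw : w ≤ u := Real.rpow_le_rpow hb0.le (by linarith) (by norm_num)
  have hkw : k ≤ w := by
    have h1 : k = (k^3) ^ ((1:ℝ)/3) := by
      rw [show (1:ℝ)/3 = ((3:ℕ):ℝ)⁻¹ by norm_num, Real.pow_rpow_inv_natCast hk.le (by norm_num)]
    rw [h1]
    exact Real.rpow_le_rpow (by positivity) (by linarith) (by norm_num)
  have hu3 : u^3 = m + (t:ℝ) := by
    rw [hudef, ← Real.rpow_natCast (((m + (t:ℝ)) ^ ((1:ℝ)/3))) 3, ← Real.rpow_mul hmtpos.le]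
    norm_num
  have hw3 : w^3 = m + ((t:ℝ)-1) := by
    rw [hwdef, ← Real.rpow_natCast (((m + ((t:ℝ)-1)) ^ ((1:ℝ)/3))) 3, ← Real.rpow_mul hb0.le]
    norm_num
  have hdiffuw : u - w ≤ 1/(u*w) := by
    refine cube_diff_le hwpos huw ?_
    rw [hu3, hw3]; linarith
  have hμt : μ t = k/u := by rw [hμ t, hudef]
  have hμt1 : μ (t-1) = k/w := by
    rw [hμ (t-1), hwdef]
    congr 3
    have hcast : ((t - 1 : ℕ) : ℝ) = (t:ℝ) - 1 := by
      have := Nat.cast_sub (R := ℝ) ht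
      simpa using this
    rw [hcast]
  have haval : a = c * (k/u)^2 := by rw [hadef, hα t, hμt]
  have hscalar : (1-a)^2 * (1/μ t) ≤ 1/μ (t-1) - (10*L^2*γ^2/ρ^2) * μ t := by
    rw [hμt, hμt1]
    exact scalar_key k c _ u w hk hwpos huw hkw hdiffuw hKnn hc a haval ha0 ha1
  -- final assembly
  rw [hI1eq, hI0eq, hIXeq]
  have hμne : μ t ≠ 0 := ne_of_gt hμpos
  have hμinv : (0:ℝ) ≤ 1/μ t := by positivity
  have step1 : (1/μ t) * ∫ w, F1 w ∂(ν.prod D)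
      ≤ (1/μ t) * ((1-a)^2 * ∫ v, G0 v ∂ν
        + 2*(1-a)^2*L^2*(μ t)^2 * ∫ v, GX v ∂ν + 2*a^2*σ^2) :=
    mul_le_mul_of_nonneg_left key hμinv
  have ha2 : a^2 = c^2 * (μ t)^4 := by rw [hadef, hα t]; ring
  have hre : (1/μ t) * ((1-a)^2 * ∫ v, G0 v ∂ν
        + 2*(1-a)^2*L^2*(μ t)^2 * ∫ v, GX v ∂ν + 2*a^2*σ^2)
      = ((1-a)^2 * (1/μ t)) * ∫ v, G0 v ∂ν
        + (2*(1-a)^2*L^2*(μ t)) * ∫ v, GX v ∂ν + 2*c^2*(μ t)^3*σ^2 := by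
    rw [ha2]; field_simp
  rw [hre] at step1
  have f1 : ((1-a)^2 * (1/μ t)) * ∫ v, G0 v ∂ν
      ≤ (1/μ (t-1)) * ∫ v, G0 v ∂ν - (10*L^2*γ^2/ρ^2) * μ t * ∫ v, G0 v ∂ν := by
    have h := mul_le_mul_of_nonneg_right hscalar hI0n
    calc ((1-a)^2 * (1/μ t)) * ∫ v, G0 v ∂ν
        ≤ (1/μ (t-1) - (10*L^2*γ^2/ρ^2) * μ t) * ∫ v, G0 v ∂ν := h
      _ = (1/μ (t-1)) * ∫ v, G0 v ∂ν - (10*L^2*γ^2/ρ^2) * μ t * ∫ v, G0 v ∂ν := by ring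
  have h1a : (1-a)^2 ≤ 1 := by
    have h0 : 0 ≤ a := ha0.le
    have h1 : (1-a)^2 = 1 - a*(2 - a) := by ring
    have h2 : 0 ≤ a*(2-a) := mul_nonneg h0 (by linarith only [ha1])
    linarith only [h1, h2]
  have f2co : 2*(1-a)^2*L^2*(μ t) ≤ 2*L^2*(μ t) := by
    have h3 := mul_le_mul_of_nonneg_right h1a (mul_nonneg (sq_nonneg L) hμpos.le)
    calc 2*(1-a)^2*L^2*(μ t) = 2*((1-a)^2*(L^2*(μ t))) := by ring
      _ ≤ 2*(1*(L^2*(μ t))) := by linarith only [h3]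
      _ = 2*L^2*(μ t) := by ring
  have f2 : (2*(1-a)^2*L^2*(μ t)) * ∫ v, GX v ∂ν ≤ (2*L^2*(μ t)) * ∫ v, GX v ∂ν :=
    mul_le_mul_of_nonneg_right f2co hIXn
  linarith only [step1, f1, f2]
end

section
/- Under the hypotheses: f(x) = E_{ξ∼D}[f(x;ξ)] differentiable and L-smooth, unbiased stochastic gradients with variance ≤ σ², constants k > 0, m ≥ k², ρ > 0, γ > 0, 8 L γ/ρ ≤ c ≤ m^{1/2}/k, μ_t = k/(m+t)^{1/2}, α_{t+1} = c μ_t; random vectors x_t, x̃_{t+1}, g_t with x_{t+1} = x_t + μ_t (x̃_{t+1} − x_t), ξ_{t+1} ∼ D independent of (x_t, x̃_{t+1}, g_t), and g_{t+1} = (1 − α_{t+1}) g_t + α_{t+1} ∇f(x_{t+1}; ξ_{t+1}): for every t ≥ 1, E‖∇f(x_{t+1}) − g_{t+1}‖² − E‖∇f(x_t) − g_t‖² ≤ −(8 L γ μ_t/ρ) E‖∇f(x_t) − g_t‖² + (L ρ μ_t/(8 γ)) E‖x̃_{t+1} − x_t‖² + (m/k²) μ_t² σ². -/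
open scoped RealInnerProductSpace
open MeasureTheory ProbabilityTheory

lemma young_aux (u v a : ℝ) (ha0 : 0 < a) (ha1 : a < 1) :
    (u + v) ^ 2 ≤ (1 / (1 - a)) * u ^ 2 + (1 / a) * v ^ 2 := by
  have h1a : 0 < 1 - a := by linarith
  rw [div_mul_eq_mul_div, div_mul_eq_mul_div, div_add_div _ _ (ne_of_gt h1a) (ne_of_gt ha0),
    le_div_iff₀ (by positivity)]
  nlinarith [sq_nonneg (a * u - (1 - a) * v)]

set_option maxHeartbeats 4000000 in
/-- one-step inequality for the momentum estimator in SUPER-ADAM,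
`τ = 0`: with `f(x) = E_ξ[f(x;ξ)]` differentiable and `L`-smooth, unbiased stochastic
gradients with variance `≤ σ²`, `k > 0`, `m ≥ k²`, `ρ, γ > 0`, `8Lγ/ρ ≤ c ≤ m^{1/2}/k`,
`μ_t = k/(m+t)^{1/2}`, `α_{t+1} = c μ_t`, `x_{t+1} = x_t + μ_t(x̃_{t+1} − x_t)`,
`ξ_{t+1} ∼ D` independent of `(x_t, x̃_{t+1}, g_t)`, and
`g_{t+1} = (1 − α_{t+1}) g_t + α_{t+1} ∇f(x_{t+1};ξ_{t+1})`: for every `t ≥ 1`,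
`E‖∇f(x_{t+1}) − g_{t+1}‖² − E‖∇f(x_t) − g_t‖²
  ≤ −(8Lγμ_t/ρ) E‖∇f(x_t) − g_t‖² + (Lρμ_t/(8γ)) E‖x̃_{t+1} − x_t‖² + (m/k²) μ_t² σ²`. -/
theorem statement8 {d : ℕ} {Ω : Type*} [MeasurableSpace Ω] (P : Measure Ω)
    [IsProbabilityMeasure P] {Ξ : Type*} [MeasurableSpace Ξ] (D : Measure Ξ)
    [IsProbabilityMeasure D]
    (fS : Ξ → EuclideanSpace ℝ (Fin d) → ℝ)
    (gS : Ξ → EuclideanSpace ℝ (Fin d) → EuclideanSpace ℝ (Fin d))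
    (f : EuclideanSpace ℝ (Fin d) → ℝ)
    (gf : EuclideanSpace ℝ (Fin d) → EuclideanSpace ℝ (Fin d))
    (L σ k m ρ γ c : ℝ) (hL : 0 < L) (hσ : 0 ≤ σ)
    (hf : ∀ x, f x = ∫ ξ, fS ξ x ∂D)
    (hgS : ∀ ξ x, HasGradientAt (fS ξ) (gS ξ x) x)
    (hgf : ∀ x, HasGradientAt f (gf x) x)
    (hsmooth : ∀ x y : EuclideanSpace ℝ (Fin d), ‖gf x - gf y‖ ≤ L * ‖x - y‖)
    (hunbiased : ∀ x, ∫ ξ, gS ξ x ∂D = gf x)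
    (hvar : ∀ x, ∫ ξ, ‖gS ξ x - gf x‖ ^ 2 ∂D ≤ σ ^ 2)
    (hgSmeas : Measurable (Function.uncurry gS))
    (hk : 0 < k) (hm : k ^ 2 ≤ m) (hρ : 0 < ρ) (hγ : 0 < γ)
    (hc1 : 8 * L * γ / ρ ≤ c) (hc2 : c ≤ m ^ ((1 : ℝ) / 2) / k)
    (μ : ℕ → ℝ) (hμ : ∀ t : ℕ, μ t = k / (m + t) ^ ((1 : ℝ) / 2))
    (α : ℕ → ℝ) (hα : ∀ t : ℕ, α (t + 1) = c * μ t) :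
    ∀ t : ℕ, 1 ≤ t →
    ∀ (xt xtil gt : Ω → EuclideanSpace ℝ (Fin d)) (ξ1 : Ω → Ξ)
      (xt1 gt1 : Ω → EuclideanSpace ℝ (Fin d)),
      Measurable xt → Measurable xtil → Measurable gt → Measurable ξ1 →
      (∀ ω, xt1 ω = xt ω + μ t • (xtil ω - xt ω)) →
      Measure.map ξ1 P = D →
      IndepFun (fun ω => (xt ω, xtil ω, gt ω)) ξ1 P →
      (∀ ω, gt1 ω = (1 - α (t + 1)) • gt ω + α (t + 1) • gS (ξ1 ω) (xt1 ω)) →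
      Integrable (fun ω => ‖gf (xt ω) - gt ω‖ ^ 2) P →
      Integrable (fun ω => ‖gf (xt1 ω) - gt1 ω‖ ^ 2) P →
      Integrable (fun ω => ‖xtil ω - xt ω‖ ^ 2) P →
      (∫ ω, ‖gf (xt1 ω) - gt1 ω‖ ^ 2 ∂P) - ∫ ω, ‖gf (xt ω) - gt ω‖ ^ 2 ∂P
        ≤ -(8 * L * γ * μ t / ρ) * ∫ ω, ‖gf (xt ω) - gt ω‖ ^ 2 ∂P
          + L * ρ * μ t / (8 * γ) * ∫ ω, ‖xtil ω - xt ω‖ ^ 2 ∂P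
          + m / k ^ 2 * μ t ^ 2 * σ ^ 2 := by
  intro t ht xt xtil gt ξ1 xt1 gt1 hxtm hxtilm hgtm hξm hxt1 hmapξ hindep hgt1 hIe hIe1 hIX
  set ν : ℝ := μ t with hνdef
  set a : ℝ := α (t + 1) with hadef
  -- basic numeric facts
  have hm0 : (0:ℝ) < m := lt_of_lt_of_le (by positivity) hm
  have hmt : (0:ℝ) < m + t := by positivity
  have hν0 : 0 < ν := by
    rw [hνdef, hμ t]; exact div_pos hk (Real.rpow_pos_of_pos hmt _)
  have hc0 : 0 < c := lt_of_lt_of_le (by positivity) hc1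
  have ha : a = c * ν := by rw [hadef, hα t]
  have ha0 : 0 < a := by rw [ha]; positivity
  have ht1 : (1:ℝ) ≤ (t:ℝ) := by exact_mod_cast ht
  have hrt : m ^ ((1:ℝ)/2) < (m + t) ^ ((1:ℝ)/2) :=
    Real.rpow_lt_rpow hm0.le (by linarith) (by norm_num)
  have ha1 : a < 1 := by
    have h1 : a ≤ (m ^ ((1:ℝ)/2) / k) * ν :=
      ha ▸ mul_le_mul_of_nonneg_right hc2 hν0.le
    have h2 : (m ^ ((1:ℝ)/2) / k) * ν = m ^ ((1:ℝ)/2) / (m + t) ^ ((1:ℝ)/2) := by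
      rw [hνdef, hμ t]; field_simp
    have h3 : m ^ ((1:ℝ)/2) / (m + t) ^ ((1:ℝ)/2) < 1 :=
      (div_lt_one (Real.rpow_pos_of_pos hmt _)).2 hrt
    linarith [h1.trans_lt (h2 ▸ h3)]
  have h1a : 0 < 1 - a := by linarith
  -- gf is Lipschitz, hence continuous and measurable
  have hgfc : Continuous gf := by
    have hlip : LipschitzWith L.toNNReal gf := by
      apply LipschitzWith.of_dist_le_mul
      intro x y
      rw [dist_eq_norm, dist_eq_norm, Real.coe_toNNReal L hL.le]
      exact hsmooth x y
    exact hlip.continuous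
  have hgfm : Measurable gf := hgfc.measurable
  have hxt1m : Measurable xt1 := by
    have : xt1 = fun ω => xt ω + ν • (xtil ω - xt ω) := funext hxt1
    rw [this]
    exact hxtm.add ((hxtilm.sub hxtm).const_smul ν)
  -- auxiliary random vectors
  set Af : Ω → EuclideanSpace ℝ (Fin d) := fun ω => gf (xt1 ω) - gt ω with hAfdef
  set Nf : Ω → EuclideanSpace ℝ (Fin d) := fun ω => gf (xt1 ω) - gS (ξ1 ω) (xt1 ω) with hNfdef
  have hAfm : Measurable Af := (hgfm.comp hxt1m).sub hgtm
  have hNfm : Measurable Nf := by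
    have h1 : Measurable (fun ω => gS (ξ1 ω) (xt1 ω)) := by
      have := hgSmeas.comp (hξm.prodMk hxt1m)
      exact this
    exact (hgfm.comp hxt1m).sub h1
  -- decomposition of the error
  have hdecomp : ∀ ω, gf (xt1 ω) - gt1 ω = (1 - a) • Af ω + a • Nf ω := by
    intro ω
    rw [hgt1 ω, hAfdef, hNfdef]
    simp only
    module
  -- pointwise bound for Af
  have hAfbound : ∀ ω, ‖Af ω‖ ^ 2 ≤
      (1 / (1 - a)) * ‖gf (xt ω) - gt ω‖ ^ 2 + (1 / a) * (L * ν) ^ 2 * ‖xtil ω - xt ω‖ ^ 2 := by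
    intro ω
    have htri : ‖Af ω‖ ≤ ‖gf (xt ω) - gt ω‖ + ‖gf (xt1 ω) - gf (xt ω)‖ := by
      have heq : Af ω = (gf (xt ω) - gt ω) + (gf (xt1 ω) - gf (xt ω)) := by
        rw [hAfdef]; abel
      rw [heq]; exact norm_add_le _ _
    have hΔ : ‖gf (xt1 ω) - gf (xt ω)‖ ≤ (L * ν) * ‖xtil ω - xt ω‖ := by
      calc ‖gf (xt1 ω) - gf (xt ω)‖ ≤ L * ‖xt1 ω - xt ω‖ := hsmooth _ _
        _ = (L * ν) * ‖xtil ω - xt ω‖ := by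
            rw [hxt1 ω, add_sub_cancel_left, norm_smul, Real.norm_eq_abs, abs_of_pos hν0]; ring
    have h1 := young_aux ‖gf (xt ω) - gt ω‖ ‖gf (xt1 ω) - gf (xt ω)‖ a ha0 ha1
    have h2 : ‖Af ω‖ ^ 2 ≤ (‖gf (xt ω) - gt ω‖ + ‖gf (xt1 ω) - gf (xt ω)‖) ^ 2 :=
      pow_le_pow_left₀ (norm_nonneg _) htri 2
    have h3 : (1 / a) * ‖gf (xt1 ω) - gf (xt ω)‖ ^ 2
        ≤ (1 / a) * ((L * ν) * ‖xtil ω - xt ω‖) ^ 2 := by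
      apply mul_le_mul_of_nonneg_left _ (by positivity)
      exact pow_le_pow_left₀ (norm_nonneg _) hΔ 2
    calc ‖Af ω‖ ^ 2 ≤ (1 / (1 - a)) * ‖gf (xt ω) - gt ω‖ ^ 2
          + (1 / a) * ‖gf (xt1 ω) - gf (xt ω)‖ ^ 2 := le_trans h2 h1
      _ ≤ _ := by rw [mul_pow] at h3; nlinarith [h3]
  -- integrability of ‖Af‖²
  have hIA : Integrable (fun ω => ‖Af ω‖ ^ 2) P := by
    apply Integrable.mono' ((hIe.const_mul (1 / (1 - a))).add
      (hIX.const_mul ((1 / a) * (L * ν) ^ 2)))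
    · exact (hAfm.norm.pow_const 2).aestronglyMeasurable
    · filter_upwards with ω
      rw [Real.norm_eq_abs, abs_of_nonneg (by positivity)]
      simpa [mul_assoc] using hAfbound ω
  -- integrability of ‖Nf‖²
  have hIN : Integrable (fun ω => ‖Nf ω‖ ^ 2) P := by
    apply Integrable.mono' ((hIe1.const_mul (2 / a ^ 2)).add
      (hIA.const_mul (2 * (1 - a) ^ 2 / a ^ 2)))
    · exact (hNfm.norm.pow_const 2).aestronglyMeasurable
    · filter_upwards with ω
      rw [Real.norm_eq_abs, abs_of_nonneg (by positivity)]
      simp only [Pi.add_apply]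
      have h1 : a • Nf ω = (gf (xt1 ω) - gt1 ω) - (1 - a) • Af ω := by
        rw [hdecomp ω]; abel
      have h2 : a * ‖Nf ω‖ ≤ ‖gf (xt1 ω) - gt1 ω‖ + (1 - a) * ‖Af ω‖ := by
        calc a * ‖Nf ω‖ = ‖a • Nf ω‖ := by
              rw [norm_smul, Real.norm_eq_abs, abs_of_pos ha0]
          _ ≤ ‖gf (xt1 ω) - gt1 ω‖ + ‖(1 - a) • Af ω‖ := by rw [h1]; exact norm_sub_le _ _
          _ = ‖gf (xt1 ω) - gt1 ω‖ + (1 - a) * ‖Af ω‖ := by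
              rw [norm_smul, Real.norm_eq_abs, abs_of_pos h1a]
      have h3 : (a * ‖Nf ω‖) ^ 2 ≤ (‖gf (xt1 ω) - gt1 ω‖ + (1 - a) * ‖Af ω‖) ^ 2 :=
        pow_le_pow_left₀ (by positivity) h2 2
      have ha2 : 0 < a ^ 2 := by positivity
      rw [div_mul_eq_mul_div, div_mul_eq_mul_div, ← add_div, le_div_iff₀ ha2]
      nlinarith [sq_nonneg (‖gf (xt1 ω) - gt1 ω‖ - (1 - a) * ‖Af ω‖)]
  -- integrability of the inner product
  have hIinner : Integrable (fun ω => ⟪Af ω, Nf ω⟫) P := by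
    apply Integrable.mono' (hIA.add hIN)
    · exact (hAfm.inner hNfm).aestronglyMeasurable
    · filter_upwards with ω
      rw [Real.norm_eq_abs]
      simp only [Pi.add_apply]
      have h1 := abs_real_inner_le_norm (Af ω) (Nf ω)
      nlinarith [sq_nonneg (‖Af ω‖ - ‖Nf ω‖), norm_nonneg (Af ω), norm_nonneg (Nf ω)]
  -- the product-measure picture
  set Y : Ω → EuclideanSpace ℝ (Fin d) × EuclideanSpace ℝ (Fin d) × EuclideanSpace ℝ (Fin d) :=
    fun ω => (xt ω, xtil ω, gt ω) with hYdef
  have hYm : Measurable Y := hxtm.prodMk (hxtilm.prodMk hgtm)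
  have hpairm : Measurable (fun ω => (Y ω, ξ1 ω)) := hYm.prodMk hξm
  have hprod : P.map (fun ω => (Y ω, ξ1 ω)) = (P.map Y).prod D := by
    rw [← hmapξ]
    exact (indepFun_iff_map_prod_eq_prod_map_map hYm.aemeasurable hξm.aemeasurable).1 hindep
  haveI : IsProbabilityMeasure (P.map Y) := Measure.isProbabilityMeasure_map hYm.aemeasurable
  set z : (EuclideanSpace ℝ (Fin d) × EuclideanSpace ℝ (Fin d) × EuclideanSpace ℝ (Fin d)) →
      EuclideanSpace ℝ (Fin d) := fun y => y.1 + ν • (y.2.1 - y.1) with hzdef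
  have hzm : Measurable z := measurable_fst.add ((measurable_snd.fst.sub measurable_fst).const_smul ν)
  set A' : (EuclideanSpace ℝ (Fin d) × EuclideanSpace ℝ (Fin d) × EuclideanSpace ℝ (Fin d)) × Ξ →
      EuclideanSpace ℝ (Fin d) := fun p => gf (z p.1) - p.1.2.2 with hA'def
  set N' : (EuclideanSpace ℝ (Fin d) × EuclideanSpace ℝ (Fin d) × EuclideanSpace ℝ (Fin d)) × Ξ →
      EuclideanSpace ℝ (Fin d) := fun p => gf (z p.1) - gS p.2 (z p.1) with hN'def
  have hA'm : Measurable A' := ((hgfm.comp (hzm.comp measurable_fst))).sub measurable_fst.snd.snd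
  have hN'm : Measurable N' := by
    have h1 : Measurable (fun p : (EuclideanSpace ℝ (Fin d) × EuclideanSpace ℝ (Fin d) ×
        EuclideanSpace ℝ (Fin d)) × Ξ => gS p.2 (z p.1)) := by
      have := hgSmeas.comp (measurable_snd.prodMk (hzm.comp measurable_fst))
      exact this
    exact (hgfm.comp (hzm.comp measurable_fst)).sub h1
  have hzY : ∀ ω, z (Y ω) = xt1 ω := by
    intro ω
    simp only [hzdef, hYdef]
    rw [hxt1 ω]
  have hcompA : ∀ ω, A' (Y ω, ξ1 ω) = Af ω := by
    intro ω
    show gf (z (Y ω)) - (Y ω).2.2 = gf (xt1 ω) - gt ω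
    rw [hzY ω]
  have hcompN : ∀ ω, N' (Y ω, ξ1 ω) = Nf ω := by
    intro ω
    show gf (z (Y ω)) - gS (ξ1 ω) (z (Y ω)) = gf (xt1 ω) - gS (ξ1 ω) (xt1 ω)
    rw [hzY ω]
  -- transfer principle
  have htrans : ∀ G : ((EuclideanSpace ℝ (Fin d) × EuclideanSpace ℝ (Fin d) ×
      EuclideanSpace ℝ (Fin d)) × Ξ) → ℝ, Measurable G →
      Integrable (fun ω => G (Y ω, ξ1 ω)) P →
      Integrable G ((P.map Y).prod D) ∧
        (∫ p, G p ∂((P.map Y).prod D)) = ∫ ω, G (Y ω, ξ1 ω) ∂P := by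
    intro G hGm hGint
    constructor
    · rw [← hprod]
      rwa [integrable_map_measure hGm.aestronglyMeasurable hpairm.aemeasurable]
    · rw [← hprod, integral_map hpairm.aemeasurable hGm.aestronglyMeasurable]
  obtain ⟨hFprod, hFeq⟩ := htrans (fun p => ⟪A' p, N' p⟫) (hA'm.inner hN'm)
    (hIinner.congr (Filter.Eventually.of_forall fun ω => by
      simp only [hcompA, hcompN]))
  obtain ⟨hNprod, hNeq⟩ := htrans (fun p => ‖N' p‖ ^ 2) (hN'm.norm.pow_const 2)
    (hIN.congr (Filter.Eventually.of_forall fun ω => by simp only [hcompN]))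
  -- the cross term vanishes
  have hinner0 : (∫ ω, ⟪Af ω, Nf ω⟫ ∂P) = 0 := by
    have e0 : (∫ ω, ⟪Af ω, Nf ω⟫ ∂P)
        = ∫ p, ⟪A' p, N' p⟫ ∂((P.map Y).prod D) := by
      rw [hFeq]
      exact integral_congr_ae (Filter.Eventually.of_forall fun ω => by
        simp only [hcompA, hcompN])
    rw [e0, integral_prod _ hFprod]
    have h0 : (∫ (y : EuclideanSpace ℝ (Fin d) × EuclideanSpace ℝ (Fin d) ×
        EuclideanSpace ℝ (Fin d)), (0:ℝ) ∂(P.map Y)) = 0 := integral_zero _ _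
    rw [← h0]
    apply integral_congr_ae
    filter_upwards [hNprod.prod_right_ae] with y hy
    have hmeasy : AEStronglyMeasurable (fun s => N' (y, s)) D :=
      (hN'm.comp measurable_prodMk_left).aestronglyMeasurable
    have hNyint : Integrable (fun s => N' (y, s)) D :=
      ((memLp_two_iff_integrable_sq_norm hmeasy).2 hy).integrable (by norm_num)
    have h1 : (∫ s, ⟪A' (y, s), N' (y, s)⟫ ∂D) = ⟪gf (z y) - y.2.2, ∫ s, N' (y, s) ∂D⟫ := by
      have hconst : ∀ s : Ξ, A' (y, s) = gf (z y) - y.2.2 := by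
        intro s; simp only [hA'def]
      simp_rw [hconst]
      exact integral_inner hNyint _
    have hgSint : Integrable (fun s => gS s (z y)) D := by
      have h2 := (integrable_const (gf (z y))).sub hNyint
      apply h2.congr
      filter_upwards with s
      simp only [Pi.sub_apply, hN'def]
      abel
    have h3 : (∫ s, N' (y, s) ∂D) = 0 := by
      have h4 : (∫ s, N' (y, s) ∂D) = gf (z y) - ∫ s, gS s (z y) ∂D := by
        simp only [hN'def]
        rw [integral_sub (integrable_const _) hgSint, integral_const]
        simp
      rw [h4, hunbiased, sub_self]
    rw [h1, h3, inner_zero_right]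
  -- the second moment of the noise is at most σ²
  have hNbound : (∫ ω, ‖Nf ω‖ ^ 2 ∂P) ≤ σ ^ 2 := by
    have heq : (∫ ω, ‖Nf ω‖ ^ 2 ∂P) = ∫ ω, ‖N' (Y ω, ξ1 ω)‖ ^ 2 ∂P :=
      integral_congr_ae (Filter.Eventually.of_forall fun ω => by simp only [hcompN])
    rw [heq, ← hNeq, integral_prod _ hNprod]
    calc (∫ y, ∫ s, ‖N' (y, s)‖ ^ 2 ∂D ∂(P.map Y)) ≤ ∫ _, σ ^ 2 ∂(P.map Y) := by
          apply integral_mono hNprod.integral_prod_left (integrable_const _)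
          intro y
          have h1 := hvar (z y)
          calc (∫ s, ‖N' (y, s)‖ ^ 2 ∂D) = ∫ s, ‖gS s (z y) - gf (z y)‖ ^ 2 ∂D := by
                apply integral_congr_ae
                filter_upwards with s
                simp only [hN'def, norm_sub_rev]
            _ ≤ σ ^ 2 := h1
      _ = σ ^ 2 := by simp
  -- expansion of the second moment of the new error
  have hexpand : (∫ ω, ‖gf (xt1 ω) - gt1 ω‖ ^ 2 ∂P)
      = (1 - a) ^ 2 * (∫ ω, ‖Af ω‖ ^ 2 ∂P) + (2 * ((1 - a) * a)) * (∫ ω, ⟪Af ω, Nf ω⟫ ∂P)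
        + a ^ 2 * ∫ ω, ‖Nf ω‖ ^ 2 ∂P := by
    have hpt : ∀ ω, ‖gf (xt1 ω) - gt1 ω‖ ^ 2
        = (1 - a) ^ 2 * ‖Af ω‖ ^ 2 + ((2 * ((1 - a) * a)) * ⟪Af ω, Nf ω⟫
          + a ^ 2 * ‖Nf ω‖ ^ 2) := by
      intro ω
      rw [hdecomp ω, norm_add_sq_real, norm_smul, norm_smul, real_inner_smul_left,
        real_inner_smul_right, Real.norm_eq_abs, Real.norm_eq_abs, abs_of_pos h1a,
        abs_of_pos ha0, mul_pow, mul_pow]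
      ring
    have hg2 : Integrable (fun ω => (2 * ((1 - a) * a)) * ⟪Af ω, Nf ω⟫
        + a ^ 2 * ‖Nf ω‖ ^ 2) P := (hIinner.const_mul _).add (hIN.const_mul _)
    rw [integral_congr_ae (Filter.Eventually.of_forall hpt),
      integral_add (hIA.const_mul ((1 - a) ^ 2)) hg2,
      integral_add (hIinner.const_mul (2 * ((1 - a) * a))) (hIN.const_mul (a ^ 2)),
      integral_const_mul, integral_const_mul, integral_const_mul]
    ring
  -- integral bound for Af
  have hIAbound : (∫ ω, ‖Af ω‖ ^ 2 ∂P)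
      ≤ (1 / (1 - a)) * (∫ ω, ‖gf (xt ω) - gt ω‖ ^ 2 ∂P)
        + (1 / a) * (L * ν) ^ 2 * ∫ ω, ‖xtil ω - xt ω‖ ^ 2 ∂P := by
    calc (∫ ω, ‖Af ω‖ ^ 2 ∂P)
        ≤ ∫ ω, ((1 / (1 - a)) * ‖gf (xt ω) - gt ω‖ ^ 2
            + (1 / a) * (L * ν) ^ 2 * ‖xtil ω - xt ω‖ ^ 2) ∂P := by
          have hg3 : Integrable (fun ω => (1 / (1 - a)) * ‖gf (xt ω) - gt ω‖ ^ 2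
              + (1 / a) * (L * ν) ^ 2 * ‖xtil ω - xt ω‖ ^ 2) P :=
            (hIe.const_mul _).add (hIX.const_mul ((1 / a) * (L * ν) ^ 2))
          exact integral_mono hIA hg3 hAfbound
      _ = _ := by
          rw [integral_add (hIe.const_mul _) (hIX.const_mul ((1 / a) * (L * ν) ^ 2)),
            integral_const_mul, integral_const_mul]
  -- collect everything
  set I0 : ℝ := ∫ ω, ‖gf (xt ω) - gt ω‖ ^ 2 ∂P with hI0def
  set IX : ℝ := ∫ ω, ‖xtil ω - xt ω‖ ^ 2 ∂P with hIXdef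
  have hI0nn : 0 ≤ I0 := integral_nonneg fun ω => by positivity
  have hIXnn : 0 ≤ IX := integral_nonneg fun ω => by positivity
  have hE1 : (∫ ω, ‖gf (xt1 ω) - gt1 ω‖ ^ 2 ∂P)
      = (1 - a) ^ 2 * (∫ ω, ‖Af ω‖ ^ 2 ∂P) + a ^ 2 * ∫ ω, ‖Nf ω‖ ^ 2 ∂P := by
    rw [hexpand, hinner0]; ring
  have h5 : (1 - a) ^ 2 * (∫ ω, ‖Af ω‖ ^ 2 ∂P)
      ≤ (1 - a) ^ 2 * ((1 / (1 - a)) * I0 + (1 / a) * (L * ν) ^ 2 * IX) :=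
    mul_le_mul_of_nonneg_left hIAbound (sq_nonneg _)
  have ht0 : 0 ≤ (1 / a) * (L * ν) ^ 2 * IX := mul_nonneg (by positivity) hIXnn
  have h7 : (1 - a) ^ 2 ≤ 1 := by nlinarith
  have h6 : (1 - a) ^ 2 * ((1 / (1 - a)) * I0 + (1 / a) * (L * ν) ^ 2 * IX)
      ≤ (1 - a) * I0 + (1 / a) * (L * ν) ^ 2 * IX := by
    have e1 : (1 - a) ^ 2 * ((1 / (1 - a)) * I0) = (1 - a) * I0 := by
      field_simp
    have e2 : (1 - a) ^ 2 * ((1 / a) * (L * ν) ^ 2 * IX) ≤ 1 * ((1 / a) * (L * ν) ^ 2 * IX) :=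
      mul_le_mul_of_nonneg_right h7 ht0
    rw [mul_add, e1]
    linarith
  have h8 : a ^ 2 * (∫ ω, ‖Nf ω‖ ^ 2 ∂P) ≤ a ^ 2 * σ ^ 2 :=
    mul_le_mul_of_nonneg_left hNbound (sq_nonneg a)
  -- the three final comparisons
  have hT1 : -(a * I0) ≤ -(8 * L * γ * ν / ρ) * I0 := by
    have h9 : 8 * L * γ * ν / ρ ≤ a := by
      rw [ha]
      calc 8 * L * γ * ν / ρ = (8 * L * γ / ρ) * ν := by ring
        _ ≤ c * ν := mul_le_mul_of_nonneg_right hc1 hν0.le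
    nlinarith [mul_le_mul_of_nonneg_right h9 hI0nn]
  have hT2 : (1 / a) * (L * ν) ^ 2 * IX ≤ L * ρ * ν / (8 * γ) * IX := by
    apply mul_le_mul_of_nonneg_right _ hIXnn
    have e3 : (1 / a) * (L * ν) ^ 2 = L ^ 2 * ν / c := by
      rw [ha]; field_simp
    rw [e3, div_le_div_iff₀ hc0 (by positivity)]
    have h10 : 8 * L * γ ≤ c * ρ := by
      rw [div_le_iff₀ hρ] at hc1; linarith
    have h11 := mul_le_mul_of_nonneg_left h10 (mul_pos hL hν0).le
    nlinarith [h11]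
  have hT3 : a ^ 2 * σ ^ 2 ≤ m / k ^ 2 * ν ^ 2 * σ ^ 2 := by
    have hsqm : (m ^ ((1:ℝ)/2)) ^ 2 = m := by
      rw [← Real.rpow_natCast (m ^ ((1:ℝ)/2)) 2, ← Real.rpow_mul hm0.le]
      norm_num
    have hc2' : c ^ 2 ≤ m / k ^ 2 := by
      have := pow_le_pow_left₀ hc0.le hc2 2
      rwa [div_pow, hsqm] at this
    have := mul_le_mul_of_nonneg_right hc2'
      (mul_nonneg (sq_nonneg ν) (sq_nonneg σ))
    calc a ^ 2 * σ ^ 2 = c ^ 2 * (ν ^ 2 * σ ^ 2) := by rw [ha]; ring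
      _ ≤ m / k ^ 2 * (ν ^ 2 * σ ^ 2) := this
      _ = m / k ^ 2 * ν ^ 2 * σ ^ 2 := by ring
  linarith [hE1, h5, h6, h8, hT1, hT2, hT3]
end

section
/- Let X ⊆ ℝ^d be a closed convex set, let f : ℝ^d → ℝ be differentiable, let H ∈ ℝ^{d×d} be a symmetric matrix with H ⪰ ρ I_d (ρ > 0), let x ∈ X, g ∈ ℝ^d and γ > 0. Let x̃ be the minimizer over y ∈ X of ⟨g, y⟩ + (1/(2γ)) (y − x)ᵀ H (y − x), let x⁺ be the minimizer over y ∈ X of ⟨∇f(x), y⟩ + (1/(2γ)) (y − x)ᵀ H (y − x), and define the gradient mapping G_X(x, ∇f(x), γ) = (x − x⁺)/γ. Then ‖G_X(x, ∇f(x), γ)‖ ≤ (1/γ) ‖x − x̃‖ + (1/ρ) ‖∇f(x) − g‖. -/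
open scoped RealInnerProductSpace

lemma aux_small_t (A B : ℝ) (h : ∀ t : ℝ, 0 < t → t ≤ 1 → 0 ≤ A + t * B) : 0 ≤ A := by
  by_contra hA
  push_neg at hA
  have hBpos : (0:ℝ) < |B| + 1 := by positivity
  set t := min 1 ((-A) / (2 * (|B| + 1))) with ht
  have htpos : 0 < t := lt_min one_pos (div_pos (by linarith) (by positivity))
  have ht1 : t ≤ 1 := min_le_left _ _
  have h2 : t * B ≤ t * (|B| + 1) := by
    apply mul_le_mul_of_nonneg_left _ htpos.le
    nlinarith [le_abs_self B]
  have h3 : t * (|B| + 1) ≤ -A / 2 := by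
    have hm := min_le_right 1 ((-A) / (2 * (|B| + 1)))
    calc t * (|B| + 1) ≤ ((-A) / (2 * (|B| + 1))) * (|B| + 1) :=
          mul_le_mul_of_nonneg_right hm hBpos.le
      _ = -A / 2 := by field_simp
  have := h t htpos ht1
  linarith

lemma aux_vi {d : ℕ} (X : Set (EuclideanSpace ℝ (Fin d))) (hXconvex : Convex ℝ X)
    (T : EuclideanSpace ℝ (Fin d) →L[ℝ] EuclideanSpace ℝ (Fin d))
    (hT : ∀ a b : EuclideanSpace ℝ (Fin d), ⟪T a, b⟫ = ⟪T b, a⟫)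
    (x v : EuclideanSpace ℝ (Fin d)) (c : ℝ) (hc : 0 < c)
    (z : EuclideanSpace ℝ (Fin d)) (hz : z ∈ X)
    (hmin : ∀ y ∈ X, ⟪v, z⟫ + c * ⟪T (z - x), z - x⟫ ≤ ⟪v, y⟫ + c * ⟪T (y - x), y - x⟫)
    (y : EuclideanSpace ℝ (Fin d)) (hy : y ∈ X) :
    0 ≤ ⟪v, y - z⟫ + 2 * c * ⟪T (z - x), y - z⟫ := by
  apply aux_small_t _ (c * ⟪T (y - z), y - z⟫)
  intro t ht0 ht1
  have hyt : z + t • (y - z) ∈ X := by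
    have h := hXconvex hz hy (by linarith : (0:ℝ) ≤ 1 - t) ht0.le (by ring)
    convert h using 1
    module
  have hm := hmin _ hyt
  have hexp : ⟪v, z + t • (y - z)⟫ + c * ⟪T (z + t • (y - z) - x), z + t • (y - z) - x⟫
      = ⟪v, z⟫ + c * ⟪T (z - x), z - x⟫
        + t * ((⟪v, y - z⟫ + 2 * c * ⟪T (z - x), y - z⟫) + t * (c * ⟪T (y - z), y - z⟫)) := by
    have e1 : z + t • (y - z) - x = (z - x) + t • (y - z) := by module
    rw [e1]
    simp only [inner_add_left, inner_add_right, map_add, map_smul, inner_smul_left,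
      inner_smul_right, RCLike.star_def, conj_trivial, hT (y - z) (z - x)]
    ring
  rw [hexp] at hm
  have h3 : 0 ≤ t * ((⟪v, y - z⟫ + 2 * c * ⟪T (z - x), y - z⟫) + t * (c * ⟪T (y - z), y - z⟫)) := by
    linarith
  nlinarith [h3, ht0]

/-- bound of the gradient mapping by the measure `M_t` in SUPER-ADAM:
for `X ⊆ ℝ^d` closed convex, `f` differentiable, `H` a symmetric matrix with
`H ⪰ ρ I_d` (`ρ > 0`), `x ∈ X`, `g ∈ ℝ^d`, `γ > 0`, if `x̃` minimizes
`⟨g, y⟩ + (1/(2γ))(y − x)ᵀH(y − x)` over `X`, `x⁺` minimizes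
`⟨∇f(x), y⟩ + (1/(2γ))(y − x)ᵀH(y − x)` over `X`, and
`G_X(x, ∇f(x), γ) = (x − x⁺)/γ`, then
`‖G_X(x, ∇f(x), γ)‖ ≤ (1/γ)‖x − x̃‖ + (1/ρ)‖∇f(x) − g‖`. -/
theorem statement9 {d : ℕ} (X : Set (EuclideanSpace ℝ (Fin d)))
    (hXne : X.Nonempty) (hXclosed : IsClosed X) (hXconvex : Convex ℝ X)
    (f : EuclideanSpace ℝ (Fin d) → ℝ)
    (gf : EuclideanSpace ℝ (Fin d) → EuclideanSpace ℝ (Fin d))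
    (hf : ∀ x, HasGradientAt f (gf x) x)
    (H : Matrix (Fin d) (Fin d) ℝ) (hHsymm : H.IsSymm)
    (ρ : ℝ) (hρ : 0 < ρ)
    (hHpd : ∀ v : EuclideanSpace ℝ (Fin d),
      ρ * ‖v‖ ^ 2 ≤ ⟪(Matrix.toEuclideanCLM (𝕜 := ℝ) H) v, v⟫)
    (x : EuclideanSpace ℝ (Fin d)) (hx : x ∈ X)
    (g : EuclideanSpace ℝ (Fin d)) (γ : ℝ) (hγ : 0 < γ)
    (xtil : EuclideanSpace ℝ (Fin d)) (hxtilX : xtil ∈ X)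
    (hxtilmin : ∀ y ∈ X,
      ⟪g, xtil⟫ + (1 / (2 * γ)) * ⟪(Matrix.toEuclideanCLM (𝕜 := ℝ) H) (xtil - x), xtil - x⟫
        ≤ ⟪g, y⟫ + (1 / (2 * γ)) * ⟪(Matrix.toEuclideanCLM (𝕜 := ℝ) H) (y - x), y - x⟫)
    (xplus : EuclideanSpace ℝ (Fin d)) (hxplusX : xplus ∈ X)
    (hxplusmin : ∀ y ∈ X,
      ⟪gf x, xplus⟫ + (1 / (2 * γ)) * ⟪(Matrix.toEuclideanCLM (𝕜 := ℝ) H) (xplus - x), xplus - x⟫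
        ≤ ⟪gf x, y⟫ + (1 / (2 * γ)) * ⟪(Matrix.toEuclideanCLM (𝕜 := ℝ) H) (y - x), y - x⟫)
    (G : EuclideanSpace ℝ (Fin d)) (hG : G = (1 / γ) • (x - xplus)) :
    ‖G‖ ≤ (1 / γ) * ‖x - xtil‖ + (1 / ρ) * ‖gf x - g‖ := by
  set T := Matrix.toEuclideanCLM (𝕜 := ℝ) H with hTdef
  have hHherm : H.IsHermitian := by
    rwa [Matrix.IsHermitian, Matrix.conjTranspose_eq_transpose_of_trivial]
  have hsymLM := Matrix.isHermitian_iff_isSymmetric.1 hHherm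
  have hTapp : ∀ a, T a = Matrix.toEuclideanLin H a := fun a => by
    rw [← Matrix.coe_toEuclideanCLM_eq_toEuclideanLin]; rfl
  have hT : ∀ a b : EuclideanSpace ℝ (Fin d), ⟪T a, b⟫ = ⟪T b, a⟫ := by
    intro a b
    rw [hTapp a, hTapp b, hsymLM a b, real_inner_comm]
  have hc : (0:ℝ) < 1 / (2 * γ) := by positivity
  have h1 := aux_vi X hXconvex T hT x g (1 / (2 * γ)) hc xtil hxtilX hxtilmin xplus hxplusX
  have h2 := aux_vi X hXconvex T hT x (gf x) (1 / (2 * γ)) hc xplus hxplusX hxplusmin xtil hxtilX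
  set w := xplus - xtil with hw
  have e1 : xtil - xplus = -w := by rw [hw]; module
  have e2 : ⟪T w, w⟫ = ⟪T (xplus - x), w⟫ - ⟪T (xtil - x), w⟫ := by
    have : (w : EuclideanSpace ℝ (Fin d)) = (xplus - x) - (xtil - x) := by rw [hw]; module
    rw [this, map_sub, inner_sub_left]
  rw [e1, inner_neg_right, inner_neg_right] at h2
  have hpd := hHpd w
  have hcs : ⟪g, w⟫ - ⟪gf x, w⟫ ≤ ‖gf x - g‖ * ‖w‖ := by
    have h4 := real_inner_le_norm (g - gf x) w
    rw [inner_sub_left] at h4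
    rw [norm_sub_rev]
    linarith
  have hkey : ρ * ‖w‖ ^ 2 * (1/γ) ≤ ‖gf x - g‖ * ‖w‖ := by
    have h5 : 2 * (1 / (2 * γ)) = 1/γ := by field_simp
    rw [h5] at h1 h2
    have h6 := mul_le_mul_of_nonneg_right hpd (le_of_lt (by positivity : (0:ℝ) < 1/γ))
    have h7 : (0:ℝ) < 1/γ := by positivity
    nlinarith [h1, h2, e2, hcs, h6, h7]
  have hkey2 : ρ * ‖w‖ ^ 2 ≤ γ * (‖gf x - g‖ * ‖w‖) := by
    have := mul_le_mul_of_nonneg_left hkey hγ.le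
    have hγ0 : γ ≠ 0 := ne_of_gt hγ
    field_simp at this
    nlinarith [this]
  have hwle : ‖w‖ ≤ (γ / ρ) * ‖gf x - g‖ := by
    rcases eq_or_lt_of_le (norm_nonneg w) with h0 | h0
    · rw [← h0]; positivity
    · rw [div_mul_eq_mul_div, le_div_iff₀ hρ]
      nlinarith [hkey2, h0]
  have htri : ‖x - xplus‖ ≤ ‖x - xtil‖ + ‖w‖ := by
    have : x - xplus = (x - xtil) + (-w) := by rw [hw]; module
    rw [this]
    calc ‖(x - xtil) + (-w)‖ ≤ ‖x - xtil‖ + ‖(-w : EuclideanSpace ℝ (Fin d))‖ := norm_add_le _ _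
      _ = ‖x - xtil‖ + ‖w‖ := by rw [norm_neg]
  have hGn : ‖G‖ = (1/γ) * ‖x - xplus‖ := by
    rw [hG, norm_smul, Real.norm_eq_abs, abs_of_pos (by positivity : (0:ℝ) < 1/γ)]
  calc ‖G‖ = (1/γ) * ‖x - xplus‖ := hGn
    _ ≤ (1/γ) * (‖x - xtil‖ + ‖w‖) := by gcongr
    _ ≤ (1/γ) * (‖x - xtil‖ + (γ / ρ) * ‖gf x - g‖) := by gcongr
    _ = (1 / γ) * ‖x - xtil‖ + (1 / ρ) * ‖gf x - g‖ := by field_simp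
end
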